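/- The satisfiability problem for the non-uniformly non-transitive logic LTL_{Past} is decidable: the predicate 'there exist a bound function f, a valuation V, and a state a ∈ ℕ such that (V,f,a) ⊨ φ' is a decidable (computable) predicate on the countable set of formulas. -/

import Mathlib

/-- Formulas of the language of `LTL_{Past,m}`: atoms, negation, conjunction,
`N` (next) and `S` (since). -/
inductive Formula : Type
  | atom : ℕ → Formula
  | neg : Formula → Formula
  | conj : Formula → Formula → Formula
  | next : Formula → Formula
  | since : Formula → Formula → Formula
deriving DecidableEq

namespace Formula

/-- Implication, defined as usual from `¬` and `∧`. -/
def imp (φ ψ : Formula) : Formula := .neg (.conj φ (.neg ψ))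

/-- Disjunction, defined as usual from `¬` and `∧`. -/
def disj (φ ψ : Formula) : Formula := .neg (.conj (.neg φ) (.neg ψ))

/-- The constant true formula `⊤`, defined as usual. -/
def top : Formula := imp (.atom 0) (.atom 0)

/-- `□φ` abbreviates `¬(⊤ S ¬φ)`. -/
def box (φ : Formula) : Formula := .neg (.since top (.neg φ))

end Formula

/-- Truth of a formula at a state `a : ℕ` in a model given by a valuation
`V : ℕ → Set ℕ`, in the bounded (measure of intransitivity `m`) semantics. -/
def Sat (m : ℕ) (V : ℕ → Set ℕ) : Formula → ℕ → Prop
  | .atom i, a => a ∈ V i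
  | .neg φ, a => ¬ Sat m V φ a
  | .conj φ ψ, a => Sat m V φ a ∧ Sat m V ψ a
  | .next φ, a => Sat m V φ (a + 1)
  | .since φ ψ, a =>
      ∃ b, a ≤ b ∧ b ≤ a + m ∧ Sat m V ψ b ∧ ∀ c, a ≤ c → c < b → Sat m V φ c

/-- A formula is valid in a model `V` if it is true at every state. -/
def ValidIn (m : ℕ) (V : ℕ → Set ℕ) (φ : Formula) : Prop := ∀ a : ℕ, Sat m V φ a

/-- The logic `LTL_{Past,m}`: the set of formulas valid in every model. -/
def Logic (m : ℕ) : Set Formula := { φ | ∀ V : ℕ → Set ℕ, ValidIn m V φ }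

/-- Truth at a state in the unbounded (transitive) semantics of `LTL`. -/
def SatU (V : ℕ → Set ℕ) : Formula → ℕ → Prop
  | .atom i, a => a ∈ V i
  | .neg φ, a => ¬ SatU V φ a
  | .conj φ ψ, a => SatU V φ a ∧ SatU V ψ a
  | .next φ, a => SatU V φ (a + 1)
  | .since φ ψ, a =>
      ∃ b, a ≤ b ∧ SatU V ψ b ∧ ∀ c, a ≤ c → c < b → SatU V φ c

/-- The transitive logic `LTL`: formulas true at every state of every model in
the unbounded semantics. -/
def LogicU : Set Formula := { φ | ∀ (V : ℕ → Set ℕ) (a : ℕ), SatU V φ a }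

/-- Truth at a state in the non-uniformly non-transitive semantics, where the
reach of `S` at state `a` is bounded by `f a` for a bound function `f`. -/
def SatB (f : ℕ → ℕ) (V : ℕ → Set ℕ) : Formula → ℕ → Prop
  | .atom i, a => a ∈ V i
  | .neg φ, a => ¬ SatB f V φ a
  | .conj φ ψ, a => SatB f V φ a ∧ SatB f V ψ a
  | .next φ, a => SatB f V φ (a + 1)
  | .since φ ψ, a =>
      ∃ b, a ≤ b ∧ b ≤ f a ∧ SatB f V ψ b ∧ ∀ c, a ≤ c → c < b → SatB f V φ c

/-- The non-uniformly non-transitive logic `LTL_{Past}`: formulas true at every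
state of every model over every bound function. -/
def LogicPast : Set Formula :=
  { φ | ∀ f : ℕ → ℕ, (∀ i, i < f i) → (∀ i, f i < f (i + 1)) →
      ∀ (V : ℕ → Set ℕ) (a : ℕ), SatB f V φ a }

/-- Substitutions map atoms to formulas and extend homomorphically. -/
def substF (σ : ℕ → Formula) : Formula → Formula
  | .atom i => σ i
  | .neg φ => .neg (substF σ φ)
  | .conj φ ψ => .conj (substF σ φ) (substF σ ψ)
  | .next φ => .next (substF σ φ)
  | .since φ ψ => .since (substF σ φ) (substF σ ψ)

/-- An inference rule: a finite list of premises and a conclusion. -/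
structure Rule : Type where
  premises : List Formula
  conclusion : Formula
deriving DecidableEq

/-- A rule is valid in a model `V` if validity of all premises in `V` implies
validity of the conclusion in `V`. -/
def RuleValid (m : ℕ) (V : ℕ → Set ℕ) (r : Rule) : Prop :=
  (∀ φ ∈ r.premises, ValidIn m V φ) → ValidIn m V r.conclusion

/-- A rule is admissible in `LTL_{Past,m}` if every substitution making all
premises theorems also makes the conclusion a theorem. -/
def Admissible (m : ℕ) (r : Rule) : Prop :=
  ∀ σ : ℕ → Formula,
    (∀ φ ∈ r.premises, substF σ φ ∈ Logic m) → substF σ r.conclusion ∈ Logic m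

/-- Admissibility in the transitive logic `LTL`. -/
def AdmissibleU (r : Rule) : Prop :=
  ∀ σ : ℕ → Formula,
    (∀ φ ∈ r.premises, substF σ φ ∈ LogicU) → substF σ r.conclusion ∈ LogicU

/-- The number of symbols in a formula. -/
def sizeF : Formula → ℕ
  | .atom _ => 1
  | .neg φ => sizeF φ + 1
  | .conj φ ψ => sizeF φ + sizeF ψ + 1
  | .next φ => sizeF φ + 1
  | .since φ ψ => sizeF φ + sizeF ψ + 1

/-- The number of symbols in a rule. -/
def ruleSize (r : Rule) : ℕ :=
  (r.premises.map sizeF).sum + sizeF r.conclusion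

/-- An (injective) numerical encoding of formulas. -/
def encF : Formula → ℕ
  | .atom i => 5 * i
  | .neg φ => 5 * encF φ + 1
  | .conj φ ψ => 5 * Nat.pair (encF φ) (encF ψ) + 2
  | .next φ => 5 * encF φ + 3
  | .since φ ψ => 5 * Nat.pair (encF φ) (encF ψ) + 4

/-- An (injective) numerical encoding of rules. -/
def encR (r : Rule) : ℕ :=
  Nat.pair (Encodable.encode (r.premises.map encF)) (encF r.conclusion)

/-- `lit true φ = φ` and `lit false φ = ¬φ`. -/
def lit (t : Bool) (φ : Formula) : Formula := if t then φ else .neg φ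

/-- Conjunction of a list of formulas. -/
def bigConj : List Formula → Formula
  | [] => Formula.top
  | [φ] => φ
  | φ :: ψ :: rest => .conj φ (bigConj (ψ :: rest))

/-- Disjunction of a list of formulas. -/
def bigDisj : List Formula → Formula
  | [] => .neg Formula.top
  | [φ] => φ
  | φ :: ψ :: rest => Formula.disj φ (bigDisj (ψ :: rest))

/-- A single disjunct of a reduced normal form over variables `x_1,…,x_n`
(the atoms `0,…,n-1`): for each `i` a literal over `x_i`, for each `i` a
literal over `N x_i`, and for each pair `i ≠ k` a literal over `x_i S x_k`. -/
def disjunct (n : ℕ) (t0 t1 : Fin n → Bool) (t2 : Fin n → Fin n → Bool) : Formula :=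
  bigConj
    (((List.finRange n).map fun i => lit (t0 i) (.atom i)) ++
     ((List.finRange n).map fun i => lit (t1 i) (.next (.atom i))) ++
     ((List.finRange n).flatMap fun i =>
        ((List.finRange n).filter fun k => k != i).map fun k =>
          lit (t2 i k) (.since (.atom i) (.atom k))))

/-- A rule is in reduced normal form if it has the shape `ε / x_1`, where `ε`
is a disjunction of disjuncts as above. -/
def IsRNF (r : Rule) : Prop :=
  ∃ n : ℕ, 0 < n ∧
    ∃ ds : List ((Fin n → Bool) × (Fin n → Bool) × (Fin n → Fin n → Bool)),
      ds ≠ [] ∧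
      r.premises = [bigDisj (ds.map fun d => disjunct n d.1 d.2.1 d.2.2)] ∧
      r.conclusion = .atom 0

/-- Boolean formulas built from argument places `p_1,…,p_n, q_1,…,q_k` using
only the Boolean connectives `¬` and `∧`. -/
inductive BForm (n k : ℕ) : Type
  | pvar : Fin n → BForm n k
  | qvar : Fin k → BForm n k
  | neg : BForm n k → BForm n k
  | conj : BForm n k → BForm n k → BForm n k

/-- Substitute formulas for the argument places of a Boolean formula. -/
def BForm.substB {n k : ℕ} (α : Fin n → Formula) (δ : Fin k → Formula) :
    BForm n k → Formula
  | .pvar i => α i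
  | .qvar j => δ j
  | .neg φ => Formula.neg (BForm.substB α δ φ)
  | .conj φ ψ => Formula.conj (BForm.substB α δ φ) (BForm.substB α δ ψ)
namespace SatDec

open Formula

/-! ### basic monotonicity helpers -/

lemma fmono {f : ℕ → ℕ} (hf : ∀ i, f i < f (i + 1)) : StrictMono f :=
  strictMono_nat_of_lt_succ hf

lemma le_iter {f : ℕ → ℕ} (hgt : ∀ i, i < f i) : ∀ j a, a ≤ f^[j] a := by
  intro j
  induction j with
  | zero => simp
  | succ j ih =>
    intro a
    rw [Function.iterate_succ_apply']
    exact le_trans (ih a) (le_of_lt (hgt _))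

lemma iter_lt {f : ℕ → ℕ} (hgt : ∀ i, i < f i) : ∀ j a, a < f^[j + 1] a := by
  intro j a
  rw [Function.iterate_succ_apply']
  exact lt_of_le_of_lt (le_iter hgt j a) (hgt _)

lemma iter_mono_cnt {f : ℕ → ℕ} (hgt : ∀ i, i < f i) {j j' : ℕ} (h : j ≤ j') (a : ℕ) :
    f^[j] a ≤ f^[j'] a := by
  induction j' with
  | zero => simp_all
  | succ j' ih =>
    rcases Nat.lt_or_ge j (j' + 1) with h' | h'
    · rw [Function.iterate_succ_apply']
      exact le_trans (ih (Nat.lt_succ_iff.mp h')) (le_of_lt (hgt _))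
    · have : j = j' + 1 := le_antisymm h h'
      subst this; rfl

lemma iter_mono_arg {f : ℕ → ℕ} (hf : ∀ i, f i < f (i + 1)) {a b : ℕ} (h : a ≤ b) (j : ℕ) :
    f^[j] a ≤ f^[j] b := by
  induction j with
  | zero => simpa
  | succ j ih =>
    rw [Function.iterate_succ_apply', Function.iterate_succ_apply']
    exact (fmono hf).monotone ih

/-! ### subformula closure -/

def cl : Formula → List Formula
  | .atom i => [.atom i]
  | .neg ψ => .neg ψ :: cl ψ
  | .conj ψ χ => .conj ψ χ :: (cl ψ ++ cl χ)
  | .next ψ => .next ψ :: cl ψ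
  | .since ψ χ => .since ψ χ :: (cl ψ ++ cl χ)

lemma self_mem_cl (φ : Formula) : φ ∈ cl φ := by
  cases φ <;> simp [cl]

lemma cl_subset {φ θ : Formula} (h : θ ∈ cl φ) : ∀ θ' ∈ cl θ, θ' ∈ cl φ := by
  induction φ with
  | atom i =>
    simp [cl] at h; subst h; simp [cl]
  | neg ψ ih =>
    rcases (by simpa [cl] using h : θ = Formula.neg ψ ∨ θ ∈ cl ψ) with h | h
    · subst h; exact fun θ' h' => h'
    · intro θ' h'; simp [cl]; right; exact ih h θ' h'
  | conj ψ χ ih1 ih2 =>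
    rcases (by simpa [cl] using h : θ = Formula.conj ψ χ ∨ θ ∈ cl ψ ∨ θ ∈ cl χ) with h | h | h
    · subst h; exact fun θ' h' => h'
    · intro θ' h'; simp [cl]; right; left; exact ih1 h θ' h'
    · intro θ' h'; simp [cl]; right; right; exact ih2 h θ' h'
  | next ψ ih =>
    rcases (by simpa [cl] using h : θ = Formula.next ψ ∨ θ ∈ cl ψ) with h | h
    · subst h; exact fun θ' h' => h'
    · intro θ' h'; simp [cl]; right; exact ih h θ' h'
  | since ψ χ ih1 ih2 =>
    rcases (by simpa [cl] using h : θ = Formula.since ψ χ ∨ θ ∈ cl ψ ∨ θ ∈ cl χ) with h | h | h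
    · subst h; exact fun θ' h' => h'
    · intro θ' h'; simp [cl]; right; left; exact ih1 h θ' h'
    · intro θ' h'; simp [cl]; right; right; exact ih2 h θ' h'

lemma mem_cl_neg {φ ψ : Formula} (h : Formula.neg ψ ∈ cl φ) : ψ ∈ cl φ :=
  cl_subset h ψ (by simp [cl, self_mem_cl])

lemma mem_cl_conj {φ ψ χ : Formula} (h : Formula.conj ψ χ ∈ cl φ) : ψ ∈ cl φ ∧ χ ∈ cl φ :=
  ⟨cl_subset h ψ (by simp [cl, self_mem_cl]), cl_subset h χ (by simp [cl, self_mem_cl])⟩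

lemma mem_cl_next {φ ψ : Formula} (h : Formula.next ψ ∈ cl φ) : ψ ∈ cl φ :=
  cl_subset h ψ (by simp [cl, self_mem_cl])

lemma mem_cl_since {φ ψ χ : Formula} (h : Formula.since ψ χ ∈ cl φ) : ψ ∈ cl φ ∧ χ ∈ cl φ :=
  ⟨cl_subset h ψ (by simp [cl, self_mem_cl]), cl_subset h χ (by simp [cl, self_mem_cl])⟩

lemma one_le_sizeF (θ : Formula) : 1 ≤ sizeF θ := by
  cases θ <;> simp [sizeF] <;> omega

lemma cl_length_le_sizeF (φ : Formula) : (cl φ).length ≤ sizeF φ := by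
  induction φ with
  | atom i => simp [cl, sizeF]
  | neg ψ ih => simp [cl, sizeF]; omega
  | conj ψ χ ih1 ih2 => simp [cl, sizeF]; omega
  | next ψ ih => simp [cl, sizeF]; omega
  | since ψ χ ih1 ih2 => simp [cl, sizeF]; omega

/-! ### shift lemma : satisfiability at any state reduces to state 0 -/

lemma shift_sat (f : ℕ → ℕ) (V : ℕ → Set ℕ) (a : ℕ) (hgt : ∀ i, i < f i) :
    ∀ θ x, SatB (fun i => f (i + a) - a) (fun i => {x | x + a ∈ V i}) θ x ↔ SatB f V θ (x + a) := by
  intro θ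
  induction θ with
  | atom i => intro x; simp [SatB]
  | neg ψ ih => intro x; simp [SatB, ih]
  | conj ψ χ ih1 ih2 => intro x; simp [SatB, ih1, ih2]
  | next ψ ih =>
    intro x; simp only [SatB, ih]
    rw [show x + 1 + a = x + a + 1 from by omega]
  | since ψ χ ih1 ih2 =>
    intro x
    simp only [SatB, ih1, ih2]
    have hfa : a ≤ f (x + a) := le_trans (Nat.le_add_left a x) (le_of_lt (hgt _))
    constructor
    · rintro ⟨b, h1, h2, h3, h4⟩
      exact ⟨b + a, by omega, by omega, h3, fun c hc1 hc2 => by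
        have := h4 (c - a) (by omega) (by omega)
        simpa [Nat.sub_add_cancel (show a ≤ c by omega)] using this⟩
    · rintro ⟨b, h1, h2, h3, h4⟩
      refine ⟨b - a, by omega, by omega, ?_, fun c hc1 hc2 => h4 (c + a) (by omega) (by omega)⟩
      simpa [Nat.sub_add_cancel (show a ≤ b by omega)] using h3

/-! ### f-localization : truth only depends on f below the relevant horizon -/

lemma loc_f {f1 f2 : ℕ → ℕ} {V : ℕ → Set ℕ} {R : ℕ}
    (hgt : ∀ i, i < f1 i) (hmono : ∀ i, f1 i < f1 (i + 1))
    (hagree : ∀ x, x ≤ R → f1 x = f2 x) :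
    ∀ θ a, f1^[sizeF θ - 1] a ≤ R → (SatB f1 V θ a ↔ SatB f2 V θ a) := by
  intro θ
  induction θ with
  | atom i => intro a _; simp [SatB]
  | neg ψ ih =>
    intro a h
    have h' : f1^[sizeF ψ - 1] a ≤ R :=
      le_trans (iter_mono_cnt hgt (by simp only [sizeF]; omega) a) h
    simp [SatB, ih a h']
  | conj ψ χ ih1 ih2 =>
    intro a h
    have h1 : f1^[sizeF ψ - 1] a ≤ R :=
      le_trans (iter_mono_cnt hgt (by simp only [sizeF]; omega) a) h
    have h2 : f1^[sizeF χ - 1] a ≤ R :=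
      le_trans (iter_mono_cnt hgt (by simp only [sizeF]; omega) a) h
    simp [SatB, ih1 a h1, ih2 a h2]
  | next ψ ih =>
    intro a h
    have hs : sizeF (Formula.next ψ) - 1 = (sizeF ψ - 1) + 1 := by
      have := one_le_sizeF ψ; simp [sizeF]; omega
    rw [hs, Function.iterate_succ_apply] at h
    have h' : f1^[sizeF ψ - 1] (a + 1) ≤ R :=
      le_trans (iter_mono_arg hmono (hgt a) _) h
    simp [SatB, ih _ h']
  | since ψ χ ih1 ih2 =>
    intro a h
    have hs : sizeF (Formula.since ψ χ) - 1 = (sizeF ψ + sizeF χ - 1) + 1 := by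
      have := one_le_sizeF ψ; have := one_le_sizeF χ; simp [sizeF]; omega
    rw [hs, Function.iterate_succ_apply] at h
    have haR : a ≤ R := by
      have h0 : a ≤ f1 a := le_of_lt (hgt a)
      exact le_trans (le_trans h0 (le_iter hgt _ _)) h
    have hsub : ∀ b, b ≤ f1 a →
        f1^[sizeF ψ - 1] b ≤ R ∧ f1^[sizeF χ - 1] b ≤ R := by
      intro b hb
      constructor
      · exact le_trans (le_trans (iter_mono_arg hmono hb _)
          (iter_mono_cnt hgt (by have := one_le_sizeF χ; omega) (f1 a))) h
      · exact le_trans (le_trans (iter_mono_arg hmono hb _)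
          (iter_mono_cnt hgt (by have := one_le_sizeF ψ; omega) (f1 a))) h
    have hfa : f1 a = f2 a := hagree a haR
    simp only [SatB, ← hfa]
    constructor
    · rintro ⟨b, h1, h2, h3, h4⟩
      exact ⟨b, h1, h2, (ih2 b (hsub b h2).2).mp h3, fun c hc1 hc2 =>
        (ih1 c (hsub c (le_trans (le_of_lt hc2) h2)).1).mp (h4 c hc1 hc2)⟩
    · rintro ⟨b, h1, h2, h3, h4⟩
      exact ⟨b, h1, h2, (ih2 b (hsub b h2).2).mpr h3, fun c hc1 hc2 =>
        (ih1 c (hsub c (le_trans (le_of_lt hc2) h2)).1).mpr (h4 c hc1 hc2)⟩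

end SatDec
namespace SatDec

open Formula

/-! ### the cut operation : removing the interval `(u, v]` from a model -/

def cσ (u v y : ℕ) : ℕ := if y ≤ u then y else y + (v - u)

def cπ (u v x : ℕ) : ℕ := if x ≤ u then x else x - (v - u)

def cV (V : ℕ → Set ℕ) (u v : ℕ) : ℕ → Set ℕ := fun i => {y | cσ u v y ∈ V i}

def cf (f : ℕ → ℕ) (u v : ℕ) : ℕ → ℕ := fun y => cπ u v (f (cσ u v y))

lemma cσ_mono_lt {u v y y' : ℕ} (h : y < y') : cσ u v y < cσ u v y' := by
  unfold cσ; split_ifs <;> omega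

lemma cσ_mono_le {u v y y' : ℕ} (h : y ≤ y') : cσ u v y ≤ cσ u v y' := by
  unfold cσ; split_ifs <;> omega

lemma cσ_rev_lt {u v y y' : ℕ} (h : cσ u v y < cσ u v y') : y < y' := by
  unfold cσ at h; split_ifs at h <;> omega

lemma cσ_surv (u v y : ℕ) : cσ u v y ≤ u ∨ v < cσ u v y := by
  unfold cσ; split_ifs <;> omega

lemma cσ_of_le {u v y : ℕ} (h : y ≤ u) : cσ u v y = y := if_pos h

lemma cσ_gt {u v y : ℕ} (huv : u < v) (h : u < y) : v < cσ u v y := by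
  unfold cσ; split_ifs <;> omega

lemma cπ_cσ (u v y : ℕ) : cπ u v (cσ u v y) = y := by
  unfold cσ cπ; split_ifs <;> omega

lemma cσ_cπ {u v x : ℕ} (huv : u < v) (hx : x ≤ u ∨ v < x) : cσ u v (cπ u v x) = x := by
  unfold cσ cπ; split_ifs <;> omega

lemma le_cπ_iff {u v b w : ℕ} (huv : u < v) (hw : w ≤ u ∨ v < w) :
    b ≤ cπ u v w ↔ cσ u v b ≤ w := by
  unfold cσ cπ; split_ifs <;> omega

lemma le_cπ_of {u v y w : ℕ} (huv : u < v) (hw : w ≤ u ∨ v < w)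
    (h : cσ u v y ≤ w) : y ≤ cπ u v w := by
  unfold cσ cπ at *; split_ifs at * <;> omega

lemma cπ_lt_of {u v y w : ℕ} (huv : u < v) (hw : w ≤ u ∨ v < w)
    (h : w < cσ u v y) : cπ u v w < y := by
  unfold cσ cπ at *; split_ifs at * <;> omega

lemma cπ_mono_surv {u v w w' : ℕ} (huv : u < v) (hw' : w' ≤ u ∨ v < w')
    (h : w ≤ w') : cπ u v w ≤ cπ u v w' := by
  unfold cπ; split_ifs <;> omega

lemma cπ_lt_surv {u v w w' : ℕ} (huv : u < v) (hw : w ≤ u ∨ v < w)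
    (hw' : w' ≤ u ∨ v < w') (h : w < w') : cπ u v w < cπ u v w' := by
  unfold cπ; split_ifs <;> omega

/-- neutrality of a state for a `since`-pair -/
def Neu (f : ℕ → ℕ) (V : ℕ → Set ℕ) (ψ χ : Formula) (c : ℕ) : Prop :=
  SatB f V ψ c ∧ ¬ SatB f V χ c

/-- condition allowing to cut `(u,v]` safely for the pair `ψ, χ` -/
def SinceCond (f : ℕ → ℕ) (V : ℕ → Set ℕ) (u v : ℕ) (ψ χ : Formula) : Prop :=
  (∀ c, u < c → c ≤ v → Neu f V ψ χ c) ∨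
  (∃ z t', u < z ∧ z ≤ v ∧ ¬ Neu f V ψ χ z ∧ (∀ c, u < c → c < z → Neu f V ψ χ c) ∧
    v < t' ∧ (∀ a, v < f a → t' ≤ f a) ∧ ¬ Neu f V ψ χ t' ∧
    (∀ c, v < c → c < t' → Neu f V ψ χ c) ∧ (SatB f V χ z ↔ SatB f V χ t'))

lemma not_neu {f V ψ χ c} (h : ¬ Neu f V ψ χ c) (hψ : SatB f V ψ c) : SatB f V χ c := by
  by_contra hc; exact h ⟨hψ, hc⟩

theorem cut_main (f : ℕ → ℕ) (V : ℕ → Set ℕ) (u v : ℕ) (φ : Formula)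
    (huv : u < v)
    (hfv : ∀ a, f a ≤ u ∨ v < f a)
    (hprof : ∀ θ ∈ cl φ, (SatB f V θ (u + 1) ↔ SatB f V θ (v + 1)))
    (hsince : ∀ ψ χ, Formula.since ψ χ ∈ cl φ → SinceCond f V u v ψ χ) :
    ∀ θ, θ ∈ cl φ → ∀ y, SatB (cf f u v) (cV V u v) θ y ↔ SatB f V θ (cσ u v y) := by
  intro θ
  induction θ with
  | atom i => intro _ y; simp [SatB, cV]
  | neg ψ ih => intro hθ y; simp [SatB, ih (mem_cl_neg hθ)]
  | conj ψ χ ih1 ih2 =>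
    intro hθ y; simp [SatB, ih1 (mem_cl_conj hθ).1, ih2 (mem_cl_conj hθ).2]
  | next ψ ih =>
    intro hθ y
    have hmem := mem_cl_next hθ
    simp only [SatB, ih hmem]
    rcases Nat.lt_trichotomy y u with hy | hy | hy
    · rw [cσ_of_le (by omega : y + 1 ≤ u), cσ_of_le (by omega : y ≤ u)]
    · rw [show cσ u v y = y from cσ_of_le (by omega),
          show cσ u v (y + 1) = v + 1 from by unfold cσ; split_ifs <;> omega, hy]
      exact (hprof ψ hmem).symm
    · rw [show cσ u v (y + 1) = cσ u v y + 1 by unfold cσ; split_ifs <;> omega]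
  | since ψ χ ih1 ih2 =>
    intro hθ y
    classical
    have Iψ := ih1 (mem_cl_since hθ).1
    have Iχ := ih2 (mem_cl_since hθ).2
    have hsc := hsince ψ χ hθ
    have hfx : f (cσ u v y) ≤ u ∨ v < f (cσ u v y) := hfv _
    simp only [SatB]
    constructor
    · rintro ⟨b', hb1, hb2, hb3, hb4⟩
      rw [Iχ] at hb3
      have hb2' : cσ u v b' ≤ f (cσ u v y) :=
        (le_cπ_iff huv hfx).mp hb2
      have hxb0 : cσ u v y ≤ cσ u v b' := cσ_mono_le hb1
      rcases Nat.lt_or_ge u y with hyu | hyu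
      · -- y > u : pure shift
        refine ⟨cσ u v b', hxb0, hb2', hb3, ?_⟩
        intro c hc1 hc2
        have hcS : c ≤ u ∨ v < c := Or.inr (lt_of_lt_of_le (cσ_gt huv hyu) hc1)
        have h1 : y ≤ cπ u v c := le_cπ_of huv hcS hc1
        have h2 : cπ u v c < b' := cπ_lt_of huv hcS hc2
        have := hb4 _ h1 h2
        rw [Iψ, cσ_cπ huv hcS] at this
        exact this
      · -- y ≤ u, so cσ y = y
        have hxy : cσ u v y = y := cσ_of_le hyu
        rcases cσ_surv u v b' with hbu | hbv
        · -- witness survives below u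
          refine ⟨cσ u v b', hxb0, hb2', hb3, ?_⟩
          intro c hc1 hc2
          have hcu : c ≤ u := by omega
          have hcc : cσ u v c = c := cσ_of_le hcu
          have h2 : c < b' := cσ_rev_lt (y := c) (by rw [hcc]; exact hc2)
          have := hb4 c (by omega) h2
          rw [Iψ, hcc] at this
          exact this
        · -- witness beyond the cut
          have hfxv : v < f (cσ u v y) := by rcases hfx with h | h <;> omega
          by_cases hNall : ∀ c, cσ u v y ≤ c → c ≤ u → Neu f V ψ χ c
          · -- prefix up to u all neutral : use SinceCond
            rcases hsc with hA | ⟨z, t', hz1, hz2, hz3, hz4, ht1, ht2, ht3, ht4, hiff⟩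
            · -- segment all neutral : keep witness
              refine ⟨cσ u v b', hxb0, hb2', hb3, ?_⟩
              intro c hc1 hc2
              rcases le_or_gt c u with hcu | hcu
              · exact (hNall c hc1 hcu).1
              · rcases le_or_gt c v with hcv | hcv
                · exact (hA c hcu hcv).1
                · have hcS : c ≤ u ∨ v < c := Or.inr hcv
                  have := hb4 _ (le_cπ_of huv hcS hc1) (cπ_lt_of huv hcS hc2)
                  rw [Iψ, cσ_cπ huv hcS] at this
                  exact this
            · -- (C) : translate witness back to z
              have ht'S : (t' : ℕ) ≤ u ∨ v < t' := Or.inr ht1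
              have hχz : SatB f V χ z := by
                rcases Nat.lt_or_ge t' (cσ u v b') with htb | htb
                · have hψt' : SatB f V ψ t' := by
                    have := hb4 _ (le_cπ_of huv ht'S (by omega)) (cπ_lt_of huv ht'S htb)
                    rw [Iψ, cσ_cπ huv ht'S] at this
                    exact this
                  exact hiff.mpr (not_neu ht3 hψt')
                · have hb0t : cσ u v b' = t' := by
                    rcases Nat.lt_or_ge (cσ u v b') t' with h | h
                    · exact absurd hb3 (ht4 _ hbv h).2
                    · omega
                  exact hiff.mpr (hb0t ▸ hb3)
              refine ⟨z, by omega, by omega, hχz, ?_⟩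
              intro c hc1 hc2
              rcases le_or_gt c u with hcu | hcu
              · exact (hNall c hc1 hcu).1
              · exact (hz4 c hcu hc2).1
          · -- some non-neutral state in [x,u] : first one is an old witness
            push_neg at hNall
            have hex : ∃ c, cσ u v y ≤ c ∧ c ≤ u ∧ ¬ Neu f V ψ χ c := by
              obtain ⟨c, h1, h2, h3⟩ := hNall
              exact ⟨c, h1, h2, h3⟩
            obtain ⟨hc1, hc2, hc3⟩ := Nat.find_spec hex
            set c₀ := Nat.find hex with hc₀
            have hψc : SatB f V ψ c₀ := by
              have h3 : cσ u v c₀ < cσ u v b' := by rw [cσ_of_le hc2]; omega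
              have h2 : c₀ < b' := cσ_rev_lt h3
              have := hb4 c₀ (by omega) h2
              rw [Iψ, cσ_of_le hc2] at this
              exact this
            refine ⟨c₀, hc1, by omega, not_neu hc3 hψc, ?_⟩
            intro c hcc1 hcc2
            have hm := Nat.find_min hex (show c < c₀ from hcc2)
            have hNc : Neu f V ψ χ c := by
              by_contra hn
              exact hm ⟨hcc1, by omega, hn⟩
            exact hNc.1
    · rintro ⟨b, hb1, hb2, hb3, hb4⟩
      rcases Nat.lt_or_ge u y with hyu | hyu
      · -- y > u : pure shift
        have hbS : b ≤ u ∨ v < b := Or.inr (lt_of_lt_of_le (cσ_gt huv hyu) hb1)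
        refine ⟨cπ u v b, le_cπ_of huv hbS hb1, ?_, ?_, ?_⟩
        · exact (le_cπ_iff huv hfx).mpr (by rw [cσ_cπ huv hbS]; exact hb2)
        · rw [Iχ, cσ_cπ huv hbS]; exact hb3
        · intro c' h1 h2
          rw [Iψ]
          refine hb4 _ (cσ_mono_le h1) ?_
          have := cσ_mono_lt (u := u) (v := v) h2
          rwa [cσ_cπ huv hbS] at this
      · have hxy : cσ u v y = y := cσ_of_le hyu
        rcases le_or_gt b u with hbu | hbu
        · -- witness below u
          refine ⟨b, by omega, ?_, ?_, ?_⟩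
          · exact (le_cπ_iff huv hfx).mpr (by rw [cσ_of_le hbu]; exact hb2)
          · rw [Iχ, cσ_of_le hbu]; exact hb3
          · intro c' h1 h2
            rw [Iψ, cσ_of_le (by omega : c' ≤ u)]
            exact hb4 c' (by omega) (by omega)
        · rcases le_or_gt b v with hbv | hbv
          · -- witness deleted : use SinceCond
            have hfxv : v < f (cσ u v y) := by rcases hfx with h | h <;> omega
            rcases hsc with hA | ⟨z, t', hz1, hz2, hz3, hz4, ht1, ht2, ht3, ht4, hiff⟩
            · exact absurd hb3 (hA b hbu hbv).2
            · have hzb : z ≤ b := by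
                by_contra h
                exact (hz4 b hbu (by omega)).2 hb3
              have hχz : SatB f V χ z := by
                rcases Nat.eq_or_lt_of_le hzb with h | h
                · exact h ▸ hb3
                · exact not_neu hz3 (hb4 z (by omega) h)
              have hχt' : SatB f V χ t' := hiff.mp hχz
              have ht'S : (t' : ℕ) ≤ u ∨ v < t' := Or.inr ht1
              have htf : t' ≤ f (cσ u v y) := ht2 _ hfxv
              refine ⟨cπ u v t', le_cπ_of huv ht'S (by omega), ?_, ?_, ?_⟩
              · exact (le_cπ_iff huv hfx).mpr (by rw [cσ_cπ huv ht'S]; exact htf)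
              · rw [Iχ, cσ_cπ huv ht'S]; exact hχt'
              · intro c' h1 h2
                rw [Iψ]
                have hcs : cσ u v c' < t' := by
                  have := cσ_mono_lt (u := u) (v := v) h2
                  rwa [cσ_cπ huv ht'S] at this
                rcases cσ_surv u v c' with hcu | hcv
                · refine hb4 _ ?_ (by omega)
                  have := cσ_mono_le (u := u) (v := v) h1
                  omega
                · exact (ht4 _ hcv hcs).1
          · -- witness beyond the cut
            have hbS : b ≤ u ∨ v < b := Or.inr hbv
            refine ⟨cπ u v b, le_cπ_of huv hbS hb1, ?_, ?_, ?_⟩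
            · exact (le_cπ_iff huv hfx).mpr (by rw [cσ_cπ huv hbS]; exact hb2)
            · rw [Iχ, cσ_cπ huv hbS]; exact hb3
            · intro c' h1 h2
              rw [Iψ]
              refine hb4 _ (cσ_mono_le h1) ?_
              have := cσ_mono_lt (u := u) (v := v) h2
              rwa [cσ_cπ huv hbS] at this

end SatDec
namespace SatDec

open Formula

open scoped Classical

lemma cf_gt {f : ℕ → ℕ} {u v : ℕ} (hgt : ∀ i, i < f i) (huv : u < v)
    (hfv : ∀ a, f a ≤ u ∨ v < f a) : ∀ y, y < cf f u v y := by
  intro y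
  have h1 := hgt (cσ u v y)
  have h2 := hfv (cσ u v y)
  unfold cf
  unfold cσ at *
  unfold cπ
  split_ifs at * <;> omega

lemma cf_mono {f : ℕ → ℕ} {u v : ℕ} (hmono : ∀ i, f i < f (i + 1)) (huv : u < v)
    (hfv : ∀ a, f a ≤ u ∨ v < f a) : ∀ y, cf f u v y < cf f u v (y + 1) := by
  intro y
  have hstep : f (cσ u v y) < f (cσ u v (y + 1)) := (fmono hmono) (cσ_mono_lt (by omega))
  exact cπ_lt_surv huv (hfv _) (hfv _) hstep

lemma surv_iter {f : ℕ → ℕ} {u v : ℕ} (hfv : ∀ a, f a ≤ u ∨ v < f a) :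
    ∀ j, f^[j] 0 ≤ u ∨ v < f^[j] 0
  | 0 => Or.inl (Nat.zero_le u)
  | (j + 1) => by rw [Function.iterate_succ_apply']; exact hfv _

lemma cf_iter {f : ℕ → ℕ} {u v : ℕ} (huv : u < v) (hfv : ∀ a, f a ≤ u ∨ v < f a) :
    ∀ j, (cf f u v)^[j] 0 = cπ u v (f^[j] 0) := by
  intro j
  induction j with
  | zero => simp [cπ]
  | succ j ih =>
    rw [Function.iterate_succ_apply', ih, Function.iterate_succ_apply']
    unfold cf
    rw [cσ_cπ huv (surv_iter hfv j)]

/-- first-nonneutral data in the window `(x, hi]` -/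
noncomputable def ftv (f : ℕ → ℕ) (V : ℕ → Set ℕ) (hi : ℕ) (ψ χ : Formula) (x : ℕ) :
    Option Bool :=
  if h : (∃ c, x < c ∧ c ≤ hi ∧ ¬ Neu f V ψ χ c) then
    some (decide (SatB f V χ (Nat.find h)))
  else none

noncomputable def ftvF (f : ℕ → ℕ) (V : ℕ → Set ℕ) (φ : Formula) (hi : ℕ) (x : ℕ) :
    Fin (cl φ).length → Option Bool :=
  fun i => match (cl φ).get i with
    | .since ψ χ => ftv f V hi ψ χ x
    | _ => none

noncomputable def prof (f : ℕ → ℕ) (V : ℕ → Set ℕ) (φ : Formula) (x : ℕ) :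
    Fin (cl φ).length → Bool :=
  fun i => decide (SatB f V ((cl φ).get i) x)

lemma exists_cut_pair (f : ℕ → ℕ) (V : ℕ → Set ℕ) (φ : Formula) (lo hi : ℕ)
    (hgap : ∀ a, f a ≤ lo ∨ hi ≤ f a)
    (hlen : lo + (2 ^ (cl φ).length * 3 ^ (cl φ).length) + 2 ≤ hi) :
    ∃ u v : ℕ, u < v ∧ v < hi ∧
      (∀ a, f a ≤ u ∨ v < f a) ∧
      (∀ θ ∈ cl φ, (SatB f V θ (u + 1) ↔ SatB f V θ (v + 1))) ∧
      (∀ ψ χ, Formula.since ψ χ ∈ cl φ → SinceCond f V u v ψ χ) := by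
  set L := (cl φ).length with hL
  set D : ℕ → ((Fin L → Bool) × (Fin L → Option Bool)) :=
    fun x => (prof f V φ (x + 1), ftvF f V φ hi x) with hD
  have hcard : (Finset.univ : Finset ((Fin L → Bool) × (Fin L → Option Bool))).card
      < (Finset.Ico lo (hi - 1)).card := by
    rw [Finset.card_univ, Nat.card_Ico]
    have hc : Fintype.card ((Fin L → Bool) × (Fin L → Option Bool)) = 2 ^ L * 3 ^ L := by
      simp only [Fintype.card_prod, Fintype.card_fun, Fintype.card_bool, Fintype.card_fin,
        Fintype.card_option]
    rw [hc]
    omega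
  obtain ⟨x1, hx1, x2, hx2, hne, heq⟩ :=
    Finset.exists_ne_map_eq_of_card_lt_of_maps_to hcard
      (fun x _ => Finset.mem_univ (D x))
  simp only [Finset.mem_Ico] at hx1 hx2
  -- order the pair
  obtain ⟨u, v, hu, hv, huv, hDeq⟩ :
      ∃ u v : ℕ, (lo ≤ u ∧ u < hi - 1) ∧ (lo ≤ v ∧ v < hi - 1) ∧ u < v ∧ D u = D v := by
    rcases lt_or_gt_of_ne hne with h | h
    · exact ⟨x1, x2, hx1, hx2, h, heq⟩
    · exact ⟨x2, x1, hx2, hx1, h, heq.symm⟩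
  refine ⟨u, v, huv, by omega, ?_, ?_, ?_⟩
  · intro a
    rcases hgap a with h | h
    · exact Or.inl (by omega)
    · exact Or.inr (by omega)
  · intro θ hθ
    obtain ⟨i, hi'⟩ := List.get_of_mem hθ
    have := congrFun (congrArg Prod.fst hDeq) i
    simp only [hD, prof] at this
    rw [hi'] at this
    exact decide_eq_decide.mp this
  · intro ψ χ hθ
    obtain ⟨i, hi'⟩ := List.get_of_mem hθ
    have hft := congrFun (congrArg Prod.snd hDeq) i
    simp only [hD, ftvF] at hft
    rw [hi'] at hft
    by_cases hNseg : ∀ c, u < c → c ≤ v → Neu f V ψ χ c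
    · exact Or.inl hNseg
    · push_neg at hNseg
      obtain ⟨c0, hc01, hc02, hc03⟩ := hNseg
      have h1ex : ∃ c, u < c ∧ c ≤ hi ∧ ¬ Neu f V ψ χ c := ⟨c0, hc01, by omega, hc03⟩
      have h2ex : ∃ c, v < c ∧ c ≤ hi ∧ ¬ Neu f V ψ χ c := by
        simp only [ftv] at hft
        rw [dif_pos h1ex] at hft
        by_contra hno
        rw [dif_neg hno] at hft
        cases hft
      have hfteq : decide (SatB f V χ (Nat.find h1ex)) = decide (SatB f V χ (Nat.find h2ex)) := by
        simp only [ftv] at hft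
        rw [dif_pos h1ex, dif_pos h2ex] at hft
        exact Option.some.inj hft
      set z := Nat.find h1ex with hz
      set t' := Nat.find h2ex with ht'
      obtain ⟨hz1, hz2, hz3⟩ := Nat.find_spec h1ex
      obtain ⟨ht1, ht2, ht3⟩ := Nat.find_spec h2ex
      have hzv : z ≤ v := le_trans (Nat.find_min' h1ex ⟨hc01, by omega, hc03⟩) hc02
      refine Or.inr ⟨z, t', hz1, hzv, hz3, ?_, ht1, ?_, ht3, ?_, ?_⟩
      · intro c hcu hcz
        have := Nat.find_min h1ex hcz
        by_contra hn
        exact this ⟨hcu, by omega, hn⟩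
      · intro a hva
        rcases hgap a with h | h
        · omega
        · omega
      · intro c hvc hct
        have := Nat.find_min h2ex hct
        by_contra hn
        exact this ⟨hvc, by omega, hn⟩
      · exact decide_eq_decide.mp hfteq

lemma gap_exists {f : ℕ → ℕ} (hgt : ∀ i, i < f i) (hmono : ∀ i, f i < f (i + 1))
    (G d : ℕ) (hH : (G + 2) ^ (d + 1) ≤ f^[d] 0) :
    ∃ lo hi, (∀ a, f a ≤ lo ∨ hi ≤ f a) ∧ lo + G + 2 ≤ hi ∧ hi ≤ f^[d] 0 := by
  by_contra hcon
  push_neg at hcon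
  have hd : 1 ≤ d := by
    by_contra h
    have hd0 : d = 0 := by omega
    subst hd0
    simp only [zero_add, pow_one, Function.iterate_zero, id_eq] at hH
    omega
  have h0 : f 0 ≤ G + 1 := by
    by_contra h
    push_neg at h
    have hf0H : f 0 ≤ f^[d] 0 := by
      have := iter_mono_cnt hgt hd 0
      simpa using this
    have := hcon 0 (f 0) (fun a => Or.inr ((fmono hmono).monotone (Nat.zero_le a))) (by omega)
    omega
  have hstep : ∀ c, f (c + 1) ≤ f^[d] 0 → f (c + 1) ≤ f c + G + 1 := by
    intro c hc
    by_contra h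
    push_neg at h
    have hgap2 : ∀ a, f a ≤ f c ∨ f (c + 1) ≤ f a := by
      intro a
      rcases le_or_gt a c with h' | h'
      · exact Or.inl ((fmono hmono).monotone h')
      · exact Or.inr ((fmono hmono).monotone h')
    have := hcon (f c) (f (c + 1)) hgap2 (by omega)
    omega
  have hlin : ∀ x, f x ≤ f^[d] 0 → f x + 1 ≤ (G + 2) * (x + 1) := by
    intro x
    induction x with
    | zero =>
      intro _
      have hr : (G + 2) * (0 + 1) = G + 2 := by ring
      omega
    | succ x ihx =>
      intro hx
      have hfx : f x ≤ f^[d] 0 := le_trans (le_of_lt (hmono x)) hx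
      have h1 := ihx hfx
      have h2 := hstep x hx
      have h3 : (G + 2) * (x + 1 + 1) = (G + 2) * (x + 1) + (G + 2) := by ring
      omega
  have hiter : ∀ j, j ≤ d → f^[j] 0 + 1 ≤ (G + 2) ^ (j + 1) := by
    intro j
    induction j with
    | zero => intro _; simp only [Function.iterate_zero, id_eq, zero_add, pow_one]; omega
    | succ j ihj =>
      intro hj
      have h1 := ihj (by omega)
      have h2 : f^[j + 1] 0 ≤ f^[d] 0 := iter_mono_cnt hgt hj 0
      rw [Function.iterate_succ_apply'] at h2 ⊢
      have h3 := hlin (f^[j] 0) h2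
      have h4 : (G + 2) * (f^[j] 0 + 1) ≤ (G + 2) * (G + 2) ^ (j + 1) :=
        Nat.mul_le_mul_left _ h1
      have h5 : (G + 2) * (G + 2) ^ (j + 1) = (G + 2) ^ (j + 1 + 1) := by ring
      omega
  have := hiter d (le_refl d)
  omega

/-- The small-model theorem: a satisfiable formula is satisfiable in a model
whose relevant horizon is bounded. -/
theorem small_model (φ : Formula) :
    ∀ H f V, (∀ i, (i:ℕ) < f i) → (∀ i, f i < f (i + 1)) → SatB f V φ 0 →
    f^[sizeF φ] 0 = H →
    ∃ f' V', (∀ i, (i:ℕ) < f' i) ∧ (∀ i, f' i < f' (i + 1)) ∧ SatB f' V' φ 0 ∧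
      f'^[sizeF φ] 0 ≤ (2 ^ (cl φ).length * 3 ^ (cl φ).length + 2) ^ (sizeF φ + 1) := by
  intro H
  induction H using Nat.strong_induction_on with
  | _ H ih =>
    intro f V hgt hmono hsat hiterH
    by_cases hsmall :
        f^[sizeF φ] 0 ≤ (2 ^ (cl φ).length * 3 ^ (cl φ).length + 2) ^ (sizeF φ + 1)
    · exact ⟨f, V, hgt, hmono, hsat, hsmall⟩
    · push_neg at hsmall
      obtain ⟨lo, hi, hgap, hlen, hhi⟩ :=
        gap_exists hgt hmono (2 ^ (cl φ).length * 3 ^ (cl φ).length) (sizeF φ)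
          (le_of_lt hsmall)
      obtain ⟨u, v, huv, hvhi, hfv, hprof, hsince⟩ :=
        exists_cut_pair f V φ lo hi hgap (by omega)
      have hcut := cut_main f V u v φ huv hfv hprof hsince
      have hsat' : SatB (cf f u v) (cV V u v) φ 0 := by
        rw [hcut φ (self_mem_cl φ) 0, cσ_of_le (Nat.zero_le u)]
        exact hsat
      have hlt : (cf f u v)^[sizeF φ] 0 < H := by
        rw [cf_iter huv hfv (sizeF φ), ← hiterH]
        have h1 : hi ≤ f^[sizeF φ] 0 := hhi
        unfold cπ
        split_ifs <;> omega
      exact ih _ hlt (cf f u v) (cV V u v) (cf_gt hgt huv hfv) (cf_mono hmono huv hfv)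
        hsat' rfl

end SatDec
namespace SatDec

open Formula

/-! ### decoding -/

def ofNatF : ℕ → Formula
  | n =>
    if h0 : n % 5 = 0 then .atom (n / 5)
    else if h1 : n % 5 = 1 then
      have : n / 5 < n := by omega
      .neg (ofNatF (n / 5))
    else if h2 : n % 5 = 2 then
      have ha := Nat.unpair_left_le (n / 5)
      have hb := Nat.unpair_right_le (n / 5)
      have : (n / 5).unpair.1 < n := by omega
      have : (n / 5).unpair.2 < n := by omega
      .conj (ofNatF (n / 5).unpair.1) (ofNatF (n / 5).unpair.2)
    else if h3 : n % 5 = 3 then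
      have : n / 5 < n := by omega
      .next (ofNatF (n / 5))
    else
      have ha := Nat.unpair_left_le (n / 5)
      have hb := Nat.unpair_right_le (n / 5)
      have : (n / 5).unpair.1 < n := by omega
      have : (n / 5).unpair.2 < n := by omega
      .since (ofNatF (n / 5).unpair.1) (ofNatF (n / 5).unpair.2)

lemma ofNatF_encF : ∀ φ : Formula, ofNatF (encF φ) = φ := by
  intro φ
  induction φ with
  | atom i =>
    simp only [encF]
    rw [ofNatF]
    rw [dif_pos (by omega)]
    congr 1
    omega
  | neg ψ ih =>
    simp only [encF]
    rw [ofNatF]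
    rw [dif_neg (by omega), dif_pos (by omega)]
    simp only [show (5 * encF ψ + 1) / 5 = encF ψ by omega, ih]
  | conj ψ χ ih1 ih2 =>
    simp only [encF]
    rw [ofNatF]
    rw [dif_neg (by omega), dif_neg (by omega), dif_pos (by omega)]
    simp only [show (5 * Nat.pair (encF ψ) (encF χ) + 2) / 5 = Nat.pair (encF ψ) (encF χ) by omega]
    rw [Nat.unpair_pair, ih1, ih2]
  | next ψ ih =>
    simp only [encF]
    rw [ofNatF]
    rw [dif_neg (by omega), dif_neg (by omega), dif_neg (by omega), dif_pos (by omega)]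
    simp only [show (5 * encF ψ + 3) / 5 = encF ψ by omega, ih]
  | since ψ χ ih1 ih2 =>
    simp only [encF]
    rw [ofNatF]
    rw [dif_neg (by omega), dif_neg (by omega), dif_neg (by omega), dif_neg (by omega)]
    simp only [show (5 * Nat.pair (encF ψ) (encF χ) + 4) / 5 = Nat.pair (encF ψ) (encF χ) by omega]
    rw [Nat.unpair_pair, ih1, ih2]

lemma sizeF_le_encF (φ : Formula) : sizeF φ ≤ encF φ + 1 := by
  induction φ with
  | atom i => simp [sizeF, encF]
  | neg ψ ih => simp only [sizeF, encF]; omega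
  | conj ψ χ ih1 ih2 =>
    simp only [sizeF, encF]
    have h1 := Nat.left_le_pair (encF ψ) (encF χ)
    have h2 := Nat.right_le_pair (encF ψ) (encF χ)
    omega
  | next ψ ih => simp only [sizeF, encF]; omega
  | since ψ χ ih1 ih2 =>
    simp only [sizeF, encF]
    have h1 := Nat.left_le_pair (encF ψ) (encF χ)
    have h2 := Nat.right_le_pair (encF ψ) (encF χ)
    omega

/-! ### bounded model : globally tame `f` -/

/-- the small-model bound -/
def BB (φ : Formula) : ℕ := (2 ^ (cl φ).length * 3 ^ (cl φ).length + 2) ^ (sizeF φ + 1)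

theorem bounded_model (φ : Formula)
    (hs : ∃ f V, (∀ i, (i:ℕ) < f i) ∧ (∀ i, f i < f (i + 1)) ∧ SatB f V φ 0) :
    ∃ f V, (∀ i, (i:ℕ) < f i) ∧ (∀ i, f i < f (i + 1)) ∧ SatB f V φ 0 ∧
      ∀ x, f x ≤ x + BB φ := by
  obtain ⟨f0, V0, hgt0, hmono0, hsat0⟩ := hs
  obtain ⟨f, V, hgt, hmono, hsat, hbd⟩ :=
    small_model φ (f0^[sizeF φ] 0) f0 V0 hgt0 hmono0 hsat0 rfl
  set d := sizeF φ with hd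
  have hd1 : 1 ≤ d := one_le_sizeF φ
  set H1 := f^[d - 1] 0 with hH1
  have hfH1 : f H1 = f^[d] 0 := by
    rw [hH1, show d = (d - 1) + 1 by omega, Function.iterate_succ_apply']
    rw [show d - 1 + 1 - 1 = d - 1 by omega]
  set f3 : ℕ → ℕ := fun x => if x ≤ H1 then f x else f H1 + (x - H1) with hf3
  have hgt3 : ∀ i, (i:ℕ) < f3 i := by
    intro i
    simp only [hf3]
    split_ifs with h
    · exact hgt i
    · have := hgt H1; omega
  have hmono3 : ∀ i, f3 i < f3 (i + 1) := by
    intro i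
    simp only [hf3]
    have hgti := hgt H1
    split_ifs with h1 h2 h2
    · exact hmono i
    · have : i = H1 := by omega
      subst this
      omega
    · omega
    · omega
  have hagree : ∀ x, x ≤ H1 → f x = f3 x := by
    intro x hx
    simp only [hf3, if_pos hx]
  have hsat3 : SatB f3 V φ 0 := by
    have := loc_f (V := V) (R := H1) hgt hmono hagree φ 0 (le_of_eq hH1.symm)
    exact this.mp hsat
  refine ⟨f3, V, hgt3, hmono3, hsat3, ?_⟩
  intro x
  simp only [hf3]
  split_ifs with h
  · have : f x ≤ f H1 := by
      rcases Nat.eq_or_lt_of_le h with h' | h'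
      · rw [h']
      · exact le_of_lt ((fmono hmono) h')
    have : f x ≤ BB φ := by rw [hfH1] at this; exact le_trans this hbd
    omega
  · have : f H1 ≤ BB φ := by rw [hfH1]; exact hbd
    omega

end SatDec
namespace SatDec

open Formula

/-! ### equations for `ofNatF`, and `encF_ofNatF` -/

lemma ofNatF_eq0 {m : ℕ} (h : m % 5 = 0) : ofNatF m = .atom (m / 5) := by
  rw [ofNatF, dif_pos h]

lemma ofNatF_eq1 {m : ℕ} (h : m % 5 = 1) : ofNatF m = .neg (ofNatF (m / 5)) := by
  rw [ofNatF, dif_neg (by omega), dif_pos h]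

lemma ofNatF_eq2 {m : ℕ} (h : m % 5 = 2) :
    ofNatF m = .conj (ofNatF (m / 5).unpair.1) (ofNatF (m / 5).unpair.2) := by
  rw [ofNatF, dif_neg (by omega), dif_neg (by omega), dif_pos h]

lemma ofNatF_eq3 {m : ℕ} (h : m % 5 = 3) : ofNatF m = .next (ofNatF (m / 5)) := by
  rw [ofNatF, dif_neg (by omega), dif_neg (by omega), dif_neg (by omega), dif_pos h]

lemma ofNatF_eq4 {m : ℕ} (h : m % 5 = 4) :
    ofNatF m = .since (ofNatF (m / 5).unpair.1) (ofNatF (m / 5).unpair.2) := by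
  rw [ofNatF, dif_neg (by omega), dif_neg (by omega), dif_neg (by omega), dif_neg (by omega)]

lemma encF_ofNatF : ∀ n, encF (ofNatF n) = n := by
  intro n
  induction n using Nat.strong_induction_on with
  | _ n ih =>
    have h5 : n % 5 = 0 ∨ n % 5 = 1 ∨ n % 5 = 2 ∨ n % 5 = 3 ∨ n % 5 = 4 := by omega
    have hle1 := Nat.unpair_left_le (n / 5)
    have hle2 := Nat.unpair_right_le (n / 5)
    rcases h5 with h | h | h | h | h
    · rw [ofNatF_eq0 h]; simp only [encF]; omega
    · rw [ofNatF_eq1 h]; simp only [encF]; rw [ih (n / 5) (by omega)]; omega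
    · rw [ofNatF_eq2 h]; simp only [encF]
      rw [ih _ (by omega), ih _ (by omega), Nat.pair_unpair]; omega
    · rw [ofNatF_eq3 h]; simp only [encF]; rw [ih (n / 5) (by omega)]; omega
    · rw [ofNatF_eq4 h]; simp only [encF]
      rw [ih _ (by omega), ih _ (by omega), Nat.pair_unpair]; omega

/-! ### certificate bounds -/

def Wn (n : ℕ) : ℕ := (2 ^ (n + 1) * 3 ^ (n + 1) + 2) ^ (n + 2)

def Xn (n : ℕ) : ℕ := Wn n + 1

def N3 (n : ℕ) : ℕ := (n + 2) * Xn n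

def Rng (n m : ℕ) : ℕ := (n + 1 - m) * Xn n

def Bse (n : ℕ) : ℕ := N3 n + Wn n + 2

lemma one_le_Wn (n : ℕ) : 1 ≤ Wn n := Nat.one_le_pow _ _ (by positivity)

lemma rng_le_N3 {n m : ℕ} : Rng n m ≤ N3 n := by
  unfold Rng N3
  exact Nat.mul_le_mul_right _ (by omega)

lemma rng_add_X_le_N3 {n m : ℕ} : Rng n m + Xn n ≤ N3 n := by
  unfold Rng N3
  have h1 : (n + 1 - m) * Xn n + Xn n = (n + 1 - m + 1) * Xn n := by ring
  have h2 : (n + 1 - m + 1) * Xn n ≤ (n + 2) * Xn n :=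
    Nat.mul_le_mul_right _ (by omega)
  omega

lemma rng_helper {n m e b a : ℕ} (hm : m ≤ n) (he : e + 1 ≤ m) (ha : a ≤ Rng n m)
    (hb : b ≤ a + Wn n) : b ≤ Rng n e := by
  unfold Rng at *
  have h1 : (n + 1 - m) * Xn n + Xn n = (n + 1 - m + 1) * Xn n := by ring
  have h2 : (n + 1 - m + 1) * Xn n ≤ (n + 1 - e) * Xn n :=
    Nat.mul_le_mul_right _ (by omega)
  have h3 : Wn n + 1 = Xn n := rfl
  omega

lemma BB_le_Wn (φ : Formula) : BB φ ≤ Wn (encF φ) := by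
  unfold BB Wn
  set n := encF φ with hn
  have hL : (cl φ).length ≤ n + 1 :=
    le_trans (cl_length_le_sizeF φ) (sizeF_le_encF φ)
  have hsz : sizeF φ + 1 ≤ n + 2 := by
    have := sizeF_le_encF φ; omega
  calc (2 ^ (cl φ).length * 3 ^ (cl φ).length + 2) ^ (sizeF φ + 1)
      ≤ (2 ^ (n + 1) * 3 ^ (n + 1) + 2) ^ (sizeF φ + 1) := by
        apply Nat.pow_le_pow_left
        have h1 : (2:ℕ) ^ (cl φ).length ≤ 2 ^ (n + 1) := Nat.pow_le_pow_right (by omega) hL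
        have h2 : (3:ℕ) ^ (cl φ).length ≤ 3 ^ (n + 1) := Nat.pow_le_pow_right (by omega) hL
        have := Nat.mul_le_mul h1 h2
        omega
    _ ≤ (2 ^ (n + 1) * 3 ^ (n + 1) + 2) ^ (n + 2) := by
        apply Nat.pow_le_pow_right (by positivity) hsz

/-! ### digits -/

def dg (base t pos : ℕ) : ℕ := t / base ^ pos % base

def gval (n tg a : ℕ) : ℕ := dg (Bse n) tg a

def tbl (n t m a : ℕ) : ℕ := dg 2 t (m * (N3 n + 1) + a)

lemma tbl_le_one (n t m a : ℕ) : tbl n t m a ≤ 1 := by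
  have : dg 2 t (m * (N3 n + 1) + a) < 2 := Nat.mod_lt _ (by omega)
  unfold tbl at *
  omega

/-! ### the certificate predicate -/

def OkG (n tg : ℕ) : Prop :=
  (∀ a, a ≤ N3 n → a < gval n tg a ∧ gval n tg a ≤ a + Wn n) ∧
  (∀ a, a < N3 n → gval n tg a < gval n tg (a + 1))

def OkRow (n tg tV tT m a : ℕ) : Prop :=
  if m % 5 = 0 then tbl n tT m a = tbl n tV (m / 5) a
  else if m % 5 = 1 then tbl n tT m a = 1 - tbl n tT (m / 5) a
  else if m % 5 = 2 then
    tbl n tT m a = tbl n tT (m / 5).unpair.1 a * tbl n tT (m / 5).unpair.2 a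
  else if m % 5 = 3 then tbl n tT m a = tbl n tT (m / 5) (a + 1)
  else
    (tbl n tT m a = 1 ↔ ∃ b, a ≤ b ∧ b ≤ gval n tg a ∧ tbl n tT (m / 5).unpair.2 b = 1 ∧
      ∀ c, a ≤ c → c < b → tbl n tT (m / 5).unpair.1 c = 1)

def Ok (n tg tV tT : ℕ) : Prop :=
  OkG n tg ∧ (∀ m, m ≤ n → ∀ a, a ≤ Rng n m → OkRow n tg tV tT m a) ∧ tbl n tT n 0 = 1

/-! ### soundness : a certificate yields a model -/

def frec (n tg : ℕ) : ℕ → ℕ := fun x =>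
  if x ≤ N3 n then gval n tg x else gval n tg (N3 n) + (x - N3 n)

def Vrec (n tV : ℕ) : ℕ → Set ℕ := fun i => {x | x ≤ N3 n ∧ tbl n tV i x = 1}

lemma frec_gt {n tg : ℕ} (hok : OkG n tg) : ∀ x, x < frec n tg x := by
  intro x
  unfold frec
  split_ifs with h
  · exact (hok.1 x h).1
  · have := (hok.1 (N3 n) (le_refl _)).1
    omega

lemma frec_mono {n tg : ℕ} (hok : OkG n tg) : ∀ x, frec n tg x < frec n tg (x + 1) := by
  intro x
  unfold frec
  have hgtN := (hok.1 (N3 n) (le_refl _)).1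
  split_ifs with h1 h2 h2
  · exact hok.2 x (by omega)
  · have hx : x = N3 n := by omega
    subst hx
    omega
  · omega
  · omega

lemma sound_main {n tg tV tT : ℕ} (hok : Ok n tg tV tT) :
    ∀ θ : Formula, encF θ ≤ n → ∀ a, a ≤ Rng n (encF θ) →
      (tbl n tT (encF θ) a = 1 ↔ SatB (frec n tg) (Vrec n tV) θ a) := by
  intro θ
  induction θ with
  | atom i =>
    intro hm a ha
    have hrow := hok.2.1 _ hm a ha
    unfold OkRow at hrow
    rw [if_pos (by simp only [encF]; omega)] at hrow
    have hdiv : encF (Formula.atom i) / 5 = i := by simp only [encF]; omega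
    rw [hdiv] at hrow
    have haN : a ≤ N3 n := le_trans ha rng_le_N3
    simp only [SatB, Vrec, Set.mem_setOf_eq]
    rw [hrow]
    constructor
    · intro h; exact ⟨haN, h⟩
    · intro h; exact h.2
  | neg ψ ih =>
    intro hm a ha
    have hrow := hok.2.1 _ hm a ha
    have he : encF (Formula.neg ψ) = 5 * encF ψ + 1 := rfl
    unfold OkRow at hrow
    rw [if_neg (by omega), if_pos (by omega)] at hrow
    have hdiv : encF (Formula.neg ψ) / 5 = encF ψ := by omega
    rw [hdiv] at hrow
    have hIH := ih (by omega) a (rng_helper (by omega) (by omega) ha (by omega))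
    have ht1 := tbl_le_one n tT (encF (Formula.neg ψ)) a
    have ht2 := tbl_le_one n tT (encF ψ) a
    simp only [SatB]
    rw [← hIH, hrow]
    omega
  | conj ψ χ ih1 ih2 =>
    intro hm a ha
    have hrow := hok.2.1 _ hm a ha
    have he : encF (Formula.conj ψ χ) = 5 * Nat.pair (encF ψ) (encF χ) + 2 := rfl
    unfold OkRow at hrow
    rw [if_neg (by omega), if_neg (by omega), if_pos (by omega)] at hrow
    have hdiv : encF (Formula.conj ψ χ) / 5 = Nat.pair (encF ψ) (encF χ) := by omega
    rw [hdiv, Nat.unpair_pair] at hrow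
    have hp1 := Nat.left_le_pair (encF ψ) (encF χ)
    have hp2 := Nat.right_le_pair (encF ψ) (encF χ)
    have hIH1 := ih1 (by omega) a (rng_helper (by omega) (by omega) ha (by omega))
    have hIH2 := ih2 (by omega) a (rng_helper (by omega) (by omega) ha (by omega))
    have ht1 := tbl_le_one n tT (encF ψ) a
    have ht2 := tbl_le_one n tT (encF χ) a
    simp only [SatB]
    rw [← hIH1, ← hIH2, hrow]
    rcases Nat.le_one_iff_eq_zero_or_eq_one.mp ht1 with h1 | h1 <;>
      rcases Nat.le_one_iff_eq_zero_or_eq_one.mp ht2 with h2 | h2 <;>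
      rw [h1, h2] <;> simp
  | next ψ ih =>
    intro hm a ha
    have hrow := hok.2.1 _ hm a ha
    have he : encF (Formula.next ψ) = 5 * encF ψ + 3 := rfl
    unfold OkRow at hrow
    rw [if_neg (by omega), if_neg (by omega), if_neg (by omega), if_pos (by omega)] at hrow
    have hdiv : encF (Formula.next ψ) / 5 = encF ψ := by omega
    rw [hdiv] at hrow
    have hW := one_le_Wn n
    have hIH := ih (by omega) (a + 1) (rng_helper (by omega) (by omega) ha (by omega))
    simp only [SatB]
    rw [← hIH, hrow]
  | since ψ χ ih1 ih2 =>
    intro hm a ha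
    have hrow := hok.2.1 _ hm a ha
    have he : encF (Formula.since ψ χ) = 5 * Nat.pair (encF ψ) (encF χ) + 4 := rfl
    unfold OkRow at hrow
    rw [if_neg (by omega), if_neg (by omega), if_neg (by omega), if_neg (by omega)] at hrow
    have hdiv : encF (Formula.since ψ χ) / 5 = Nat.pair (encF ψ) (encF χ) := by omega
    rw [hdiv, Nat.unpair_pair] at hrow
    have hp1 := Nat.left_le_pair (encF ψ) (encF χ)
    have hp2 := Nat.right_le_pair (encF ψ) (encF χ)
    have haN : a ≤ N3 n := le_trans ha rng_le_N3
    have hga := (hok.1.1 a haN)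
    have hfa : frec n tg a = gval n tg a := by unfold frec; rw [if_pos haN]
    simp only [SatB]
    rw [hrow, hfa]
    constructor
    · rintro ⟨b, h1, h2, h3, h4⟩
      refine ⟨b, h1, h2, ?_, ?_⟩
      · exact (ih2 (by omega) b (rng_helper (by omega) (by omega) ha (by omega))).mp h3
      · intro c hc1 hc2
        exact (ih1 (by omega) c (rng_helper (by omega) (by omega) ha (by omega))).mp (h4 c hc1 hc2)
    · rintro ⟨b, h1, h2, h3, h4⟩
      refine ⟨b, h1, h2, ?_, ?_⟩
      · exact (ih2 (by omega) b (rng_helper (by omega) (by omega) ha (by omega))).mpr h3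
      · intro c hc1 hc2
        exact (ih1 (by omega) c (rng_helper (by omega) (by omega) ha (by omega))).mpr (h4 c hc1 hc2)

theorem sound {n tg tV tT : ℕ} (hok : Ok n tg tV tT) :
    ∃ f V, (∀ i, (i:ℕ) < f i) ∧ (∀ i, f i < f (i + 1)) ∧ SatB f V (ofNatF n) 0 := by
  refine ⟨frec n tg, Vrec n tV, frec_gt hok.1, frec_mono hok.1, ?_⟩
  have := sound_main hok (ofNatF n) (by rw [encF_ofNatF]) 0 (by omega)
  rw [encF_ofNatF] at this
  exact this.mp hok.2.2

end SatDec
namespace SatDec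

open Formula

/-! ### building numbers with prescribed digits -/

def mkL (base : ℕ) : List ℕ → ℕ
  | [] => 0
  | d :: ds => d % base + base * mkL base ds

lemma mkL_lt (base : ℕ) (hb : 1 ≤ base) : ∀ L : List ℕ, mkL base L < base ^ L.length := by
  intro L
  induction L with
  | nil => simp [mkL]
  | cons d ds ih =>
    simp only [mkL, List.length_cons]
    have hd : d % base < base := Nat.mod_lt _ (by omega)
    have hmul : base * (mkL base ds + 1) = base * mkL base ds + base := by ring
    have h2 : base * (mkL base ds + 1) ≤ base * base ^ ds.length :=
      Nat.mul_le_mul_left _ ih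
    have hpow : base ^ (ds.length + 1) = base * base ^ ds.length := by ring
    omega

lemma dg_mkL (base : ℕ) (hb : 2 ≤ base) :
    ∀ (L : List ℕ) (i : ℕ), dg base (mkL base L) i = L.getD i 0 % base := by
  intro L
  induction L with
  | nil => intro i; simp [mkL, dg]
  | cons d ds ih =>
    intro i
    cases i with
    | zero =>
      simp only [dg, pow_zero, Nat.div_one, mkL, List.getD_cons_zero]
      rw [Nat.add_mul_mod_self_left, Nat.mod_eq_of_lt (Nat.mod_lt _ (by omega))]
    | succ i =>
      simp only [dg, mkL, List.getD_cons_succ]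
      rw [pow_succ', ← Nat.div_div_eq_div_mul]
      rw [Nat.add_mul_div_left _ _ (by omega : 0 < base)]
      rw [Nat.div_eq_of_lt (Nat.mod_lt _ (by omega)), Nat.zero_add]
      exact ih i

lemma getD_range_map {k a : ℕ} (f : ℕ → ℕ) (h : a < k) :
    (((List.range k).map f).getD a 0) = f a := by
  rw [List.getD_eq_getElem _ _ (by simpa using h)]
  simp

/-! ### completeness : a bounded model yields a certificate -/

theorem complete (φ : Formula)
    (hs : ∃ f V, (∀ i, (i:ℕ) < f i) ∧ (∀ i, f i < f (i + 1)) ∧ SatB f V φ 0) :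
    ∃ tg tV tT, tg < Bse (encF φ) ^ (N3 (encF φ) + 1) ∧
      tV < 2 ^ ((encF φ + 1) * (N3 (encF φ) + 1)) ∧
      tT < 2 ^ ((encF φ + 1) * (N3 (encF φ) + 1)) ∧
      Ok (encF φ) tg tV tT := by
  classical
  obtain ⟨f, V, hgt, hmono, hsat, hbd⟩ := bounded_model φ hs
  set n := encF φ with hn
  have hWn : BB φ ≤ Wn n := BB_le_Wn φ
  have hBse : 2 ≤ Bse n := by unfold Bse; omega
  set B' := N3 n + 1 with hB'
  set tg := mkL (Bse n) ((List.range B').map f) with htg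
  set tV := mkL 2 ((List.range ((n + 1) * B')).map
    (fun p => if (p % B') ∈ V (p / B') then 1 else 0)) with htV
  set tT := mkL 2 ((List.range ((n + 1) * B')).map
    (fun p => if SatB f V (ofNatF (p / B')) (p % B') then 1 else 0)) with htT
  have hgv : ∀ a, a ≤ N3 n → gval n tg a = f a := by
    intro a ha
    unfold gval
    rw [htg, dg_mkL _ hBse, getD_range_map f (by omega)]
    have : f a < Bse n := by
      have := hbd a
      unfold Bse
      omega
    exact Nat.mod_eq_of_lt this
  have hpos : ∀ m a : ℕ, m ≤ n → a ≤ N3 n →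
      (m * B' + a) / B' = m ∧ (m * B' + a) % B' = a ∧ m * B' + a < (n + 1) * B' := by
    intro m a hm ha
    have h1 : (m * B' + a) / B' = m := by
      rw [Nat.mul_comm m B', Nat.mul_add_div (by omega)]
      rw [Nat.div_eq_of_lt (by omega)]
      omega
    have h2 : (m * B' + a) % B' = a := by
      rw [Nat.mul_comm m B', Nat.mul_add_mod]
      exact Nat.mod_eq_of_lt (by omega)
    refine ⟨h1, h2, ?_⟩
    have : (m + 1) * B' ≤ (n + 1) * B' := Nat.mul_le_mul_right _ (by omega)
    have : (m + 1) * B' = m * B' + B' := by ring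
    omega
  have hTb : ∀ m a : ℕ, m ≤ n → a ≤ N3 n →
      tbl n tT m a = if SatB f V (ofNatF m) a then 1 else 0 := by
    intro m a hm ha
    obtain ⟨h1, h2, h3⟩ := hpos m a hm ha
    unfold tbl
    rw [htT, dg_mkL _ (by omega), getD_range_map _ (by rw [hB'] at h3 ⊢; exact h3)]
    rw [h1, h2]
    split_ifs <;> simp
  have hVb : ∀ m a : ℕ, m ≤ n → a ≤ N3 n →
      tbl n tV m a = if a ∈ V m then 1 else 0 := by
    intro m a hm ha
    obtain ⟨h1, h2, h3⟩ := hpos m a hm ha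
    unfold tbl
    rw [htV, dg_mkL _ (by omega), getD_range_map _ (by rw [hB'] at h3 ⊢; exact h3)]
    rw [h1, h2]
    split_ifs <;> simp
  have hokG : OkG n tg := by
    constructor
    · intro a ha
      rw [hgv a ha]
      have := hgt a
      have := hbd a
      constructor
      · omega
      · have : BB φ ≤ Wn n := hWn
        omega
    · intro a ha
      rw [hgv a (by omega), hgv (a + 1) (by omega)]
      exact hmono a
  refine ⟨tg, tV, tT, ?_, ?_, ?_, hokG, ?_, ?_⟩
  · rw [htg]
    have := mkL_lt (Bse n) (by omega) ((List.range B').map f)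
    simpa using this
  · rw [htV]
    have := mkL_lt 2 (by omega) ((List.range ((n + 1) * B')).map
      (fun p => if (p % B') ∈ V (p / B') then 1 else 0))
    simpa using this
  · rw [htT]
    have := mkL_lt 2 (by omega) ((List.range ((n + 1) * B')).map
      (fun p => if SatB f V (ofNatF (p / B')) (p % B') then 1 else 0))
    simpa using this
  · -- rows
    intro m hm a ha
    have haN : a ≤ N3 n := le_trans ha rng_le_N3
    have haN1 : a + 1 ≤ N3 n := by
      have := rng_add_X_le_N3 (n := n) (m := m)
      have := one_le_Wn n
      have hX : 1 ≤ Xn n := by unfold Xn; omega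
      omega
    have hdle : m / 5 ≤ n := by omega
    have hu1 : (m / 5).unpair.1 ≤ n := le_trans (le_trans (Nat.unpair_left_le _) (by omega)) (le_refl n)
    have hu2 : (m / 5).unpair.2 ≤ n := le_trans (le_trans (Nat.unpair_right_le _) (by omega)) (le_refl n)
    unfold OkRow
    split_ifs with h0 h1 h2 h3
    · rw [hTb m a hm haN, hVb (m / 5) a hdle haN, ofNatF_eq0 h0]
      simp only [SatB]
      by_cases hS : a ∈ V (m / 5) <;> simp_all
    · rw [hTb m a hm haN, hTb (m / 5) a hdle haN, ofNatF_eq1 h1]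
      simp only [SatB]
      split_ifs with hS1 hS2 <;> simp_all
    · rw [hTb m a hm haN, hTb _ a hu1 haN, hTb _ a hu2 haN, ofNatF_eq2 h2]
      simp only [SatB]
      by_cases hS1 : SatB f V (ofNatF (Nat.unpair (m / 5)).1) a <;>
        by_cases hS2 : SatB f V (ofNatF (Nat.unpair (m / 5)).2) a <;> simp_all
    · rw [hTb m a hm haN, hTb (m / 5) (a + 1) hdle haN1, ofNatF_eq3 h3]
      simp only [SatB]
      by_cases hS : SatB f V (ofNatF (m / 5)) (a + 1) <;> simp_all
    · have h4 : m % 5 = 4 := by omega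
      rw [hTb m a hm haN, ofNatF_eq4 h4]
      have hfb : ∀ b, b ≤ gval n tg a → b ≤ N3 n := by
        intro b hb
        rw [hgv a haN] at hb
        have := hbd a
        have := rng_add_X_le_N3 (n := n) (m := m)
        have hX : Wn n + 1 = Xn n := rfl
        omega
      constructor
      · intro hone
        have hS : SatB f V (Formula.since (ofNatF (m / 5).unpair.1) (ofNatF (m / 5).unpair.2)) a := by
          by_contra hno
          rw [if_neg hno] at hone
          omega
        obtain ⟨b, hb1, hb2, hb3, hb4⟩ := hS
        have hbg : b ≤ gval n tg a := by rw [hgv a haN]; exact hb2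
        refine ⟨b, hb1, hbg, ?_, ?_⟩
        · rw [hTb _ b hu2 (hfb b hbg), if_pos hb3]
        · intro c hc1 hc2
          rw [hTb _ c hu1 (hfb c (by omega)), if_pos (hb4 c hc1 hc2)]
      · rintro ⟨b, hb1, hb2, hb3, hb4⟩
        rw [hTb _ b hu2 (hfb b hb2)] at hb3
        have hSb : SatB f V (ofNatF (m / 5).unpair.2) b := by
          by_contra hno
          rw [if_neg hno] at hb3
          omega
        have hSc : ∀ c, a ≤ c → c < b → SatB f V (ofNatF (m / 5).unpair.1) c := by
          intro c hc1 hc2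
          have := hb4 c hc1 hc2
          rw [hTb _ c hu1 (hfb c (by omega))] at this
          by_contra hno
          rw [if_neg hno] at this
          omega
        rw [if_pos ?_]
        exact ⟨b, hb1, by rw [hgv a haN] at hb2; exact hb2, hSb, hSc⟩
  · -- acceptance
    rw [hTb n 0 (le_refl n) (by omega), hn, ofNatF_encF, if_pos hsat]

end SatDec
namespace SatDec

open Formula

/-! ### boolean bounded quantifiers -/

def allB (k : ℕ) (p : ℕ → Bool) : Bool :=
  (List.range k).foldl (fun r x => r && p x) true

def anyB (k : ℕ) (p : ℕ → Bool) : Bool :=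
  (List.range k).foldl (fun r x => r || p x) false

lemma foldl_and_eq (p : ℕ → Bool) :
    ∀ (L : List ℕ) (r : Bool), (L.foldl (fun r x => r && p x) r = true) ↔
      (r = true ∧ ∀ x ∈ L, p x = true) := by
  intro L
  induction L with
  | nil => intro r; simp
  | cons d ds ih =>
    intro r
    simp only [List.foldl_cons, ih, Bool.and_eq_true, List.mem_cons]
    constructor
    · rintro ⟨⟨h1, h2⟩, h3⟩
      refine ⟨h1, fun x hx => ?_⟩
      rcases hx with h | h
      · subst h; exact h2
      · exact h3 x h
    · rintro ⟨h1, h2⟩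
      exact ⟨⟨h1, h2 d (Or.inl rfl)⟩, fun x hx => h2 x (Or.inr hx)⟩

lemma foldl_or_eq (p : ℕ → Bool) :
    ∀ (L : List ℕ) (r : Bool), (L.foldl (fun r x => r || p x) r = true) ↔
      (r = true ∨ ∃ x ∈ L, p x = true) := by
  intro L
  induction L with
  | nil => intro r; simp
  | cons d ds ih =>
    intro r
    simp only [List.foldl_cons, ih, Bool.or_eq_true, List.mem_cons]
    constructor
    · rintro (⟨h | h⟩ | ⟨x, hx, hp⟩)
      · exact Or.inl h
      · exact Or.inr ⟨d, Or.inl rfl, h⟩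
      · exact Or.inr ⟨x, Or.inr hx, hp⟩
    · rintro (h | ⟨x, hx | hx, hp⟩)
      · exact Or.inl (Or.inl h)
      · exact Or.inl (Or.inr (hx ▸ hp))
      · exact Or.inr ⟨x, hx, hp⟩

lemma allB_iff (k : ℕ) (p : ℕ → Bool) : allB k p = true ↔ ∀ i, i < k → p i = true := by
  unfold allB
  rw [foldl_and_eq]
  simp [List.mem_range]

lemma anyB_iff (k : ℕ) (p : ℕ → Bool) : anyB k p = true ↔ ∃ i, i < k ∧ p i = true := by
  unfold anyB
  rw [foldl_or_eq]
  simp [List.mem_range]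

/-! ### the checker -/

def chkRow (n tg tV tT m a : ℕ) : Bool :=
  if m % 5 = 0 then decide (tbl n tT m a = tbl n tV (m / 5) a)
  else if m % 5 = 1 then decide (tbl n tT m a = 1 - tbl n tT (m / 5) a)
  else if m % 5 = 2 then
    decide (tbl n tT m a = tbl n tT (m / 5).unpair.1 a * tbl n tT (m / 5).unpair.2 a)
  else if m % 5 = 3 then decide (tbl n tT m a = tbl n tT (m / 5) (a + 1))
  else
    decide ((decide (tbl n tT m a = 1)) =
      anyB (gval n tg a + 1) (fun b => decide (a ≤ b) && decide (tbl n tT (m / 5).unpair.2 b = 1) &&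
        allB b (fun c => decide (c < a) || decide (tbl n tT (m / 5).unpair.1 c = 1))))

def chkG (n tg : ℕ) : Bool :=
  allB (N3 n + 1) (fun a => decide (a < gval n tg a) && decide (gval n tg a ≤ a + Wn n)) &&
  allB (N3 n) (fun a => decide (gval n tg a < gval n tg (a + 1)))

def chk (n tg tV tT : ℕ) : Bool :=
  chkG n tg &&
  allB (n + 1) (fun m => allB (Rng n m + 1) (fun a => chkRow n tg tV tT m a)) &&
  decide (tbl n tT n 0 = 1)

def decb (n : ℕ) : Bool :=
  anyB (Bse n ^ (N3 n + 1)) (fun tg =>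
    anyB (2 ^ ((n + 1) * (N3 n + 1))) (fun tV =>
      anyB (2 ^ ((n + 1) * (N3 n + 1))) (fun tT => chk n tg tV tT)))

lemma chkRow_iff (n tg tV tT m a : ℕ) :
    chkRow n tg tV tT m a = true ↔ OkRow n tg tV tT m a := by
  unfold chkRow OkRow
  split_ifs with h0 h1 h2 h3
  · simp
  · simp
  · simp
  · simp
  · rw [decide_eq_true_eq]
    set Q : ℕ → Bool := fun b => decide (a ≤ b) && decide (tbl n tT (m / 5).unpair.2 b = 1) &&
        allB b (fun c => decide (c < a) || decide (tbl n tT (m / 5).unpair.1 c = 1)) with hQ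
    constructor
    · intro h
      constructor
      · intro ht
        have : anyB (gval n tg a + 1) Q = true := by rw [← h]; exact decide_eq_true ht
        rw [anyB_iff] at this
        obtain ⟨b, hb1, hb2⟩ := this
        simp only [hQ, Bool.and_eq_true, decide_eq_true_eq] at hb2
        obtain ⟨⟨hab, htb⟩, hall⟩ := hb2
        rw [allB_iff] at hall
        refine ⟨b, hab, by omega, htb, ?_⟩
        intro c hc1 hc2
        have := hall c hc2
        simp only [Bool.or_eq_true, decide_eq_true_eq] at this
        rcases this with h' | h'
        · omega
        · exact h'
      · rintro ⟨b, hb1, hb2, hb3, hb4⟩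
        have hQt : anyB (gval n tg a + 1) Q = true := by
          rw [anyB_iff]
          refine ⟨b, by omega, ?_⟩
          simp only [hQ, Bool.and_eq_true, decide_eq_true_eq]
          refine ⟨⟨hb1, hb3⟩, ?_⟩
          rw [allB_iff]
          intro c hc
          simp only [Bool.or_eq_true, decide_eq_true_eq]
          rcases Nat.lt_or_ge c a with h' | h'
          · exact Or.inl h'
          · exact Or.inr (hb4 c h' hc)
        rw [hQt] at h
        exact of_decide_eq_true (by rw [h])
    · intro h
      rcases Bool.eq_false_or_eq_true (anyB (gval n tg a + 1) Q) with hA | hA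
      case _ =>
        rw [hA, decide_eq_true_eq]
        rw [anyB_iff] at hA
        obtain ⟨b, hb1, hb2⟩ := hA
        simp only [hQ, Bool.and_eq_true, decide_eq_true_eq] at hb2
        obtain ⟨⟨hab, htb⟩, hall⟩ := hb2
        rw [allB_iff] at hall
        apply h.mpr
        refine ⟨b, hab, by omega, htb, ?_⟩
        intro c hc1 hc2
        have := hall c hc2
        simp only [Bool.or_eq_true, decide_eq_true_eq] at this
        rcases this with h' | h'
        · omega
        · exact h'
      case _ =>
        rw [hA, decide_eq_false_iff_not]
        intro ht
        obtain ⟨b, hb1, hb2, hb3, hb4⟩ := h.mp ht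
        have hQt : anyB (gval n tg a + 1) Q = true := by
          rw [anyB_iff]
          refine ⟨b, by omega, ?_⟩
          simp only [hQ, Bool.and_eq_true, decide_eq_true_eq]
          refine ⟨⟨hb1, hb3⟩, ?_⟩
          rw [allB_iff]
          intro c hc
          simp only [Bool.or_eq_true, decide_eq_true_eq]
          rcases Nat.lt_or_ge c a with h' | h'
          · exact Or.inl h'
          · exact Or.inr (hb4 c h' hc)
        rw [hA] at hQt
        exact Bool.noConfusion hQt


lemma chk_iff (n tg tV tT : ℕ) : chk n tg tV tT = true ↔ Ok n tg tV tT := by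
  unfold chk chkG Ok OkG
  simp only [Bool.and_eq_true, allB_iff, Bool.or_eq_true, decide_eq_true_eq,
    Bool.and_eq_true]
  constructor
  · rintro ⟨⟨⟨h1, h2⟩, h3⟩, h4⟩
    refine ⟨⟨fun a ha => ?_, fun a ha => h2 a ha⟩, fun m hm a ha => ?_, h4⟩
    · have := h1 a (by omega)
      simpa using this
    · have := h3 m (by omega) a (by omega)
      exact (chkRow_iff _ _ _ _ _ _).mp this
  · rintro ⟨⟨h1, h2⟩, h3, h4⟩
    refine ⟨⟨⟨fun a ha => ?_, fun a ha => h2 a ha⟩, fun m hm a ha => ?_⟩, h4⟩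
    · have := h1 a (by omega)
      simpa using this
    · exact (chkRow_iff _ _ _ _ _ _).mpr (h3 m (by omega) a (by omega))

lemma decb_iff (n : ℕ) : decb n = true ↔
    ∃ tg tV tT, tg < Bse n ^ (N3 n + 1) ∧ tV < 2 ^ ((n + 1) * (N3 n + 1)) ∧
      tT < 2 ^ ((n + 1) * (N3 n + 1)) ∧ Ok n tg tV tT := by
  unfold decb
  simp only [anyB_iff, chk_iff]
  constructor
  · rintro ⟨tg, h1, tV, h2, tT, h3, h4⟩
    exact ⟨tg, tV, tT, h1, h2, h3, h4⟩
  · rintro ⟨tg, tV, tT, h1, h2, h3, h4⟩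
    exact ⟨tg, h1, tV, h2, tT, h3, h4⟩

end SatDec
namespace SatDec

open Formula

/-! ### the main equivalence -/

theorem sat_iff_decb (φ : Formula) :
    (∃ f : ℕ → ℕ, (∀ i, (i:ℕ) < f i) ∧ (∀ i, f i < f (i + 1)) ∧
        ∃ (V : ℕ → Set ℕ) (a : ℕ), SatB f V φ a) ↔ decb (encF φ) = true := by
  rw [decb_iff]
  constructor
  · rintro ⟨f, hgt, hmono, V, a, hsat⟩
    have hgt' : ∀ i : ℕ, i < f (i + a) - a := by
      intro i; have := hgt (i + a); omega
    have hmono' : ∀ i : ℕ, f (i + a) - a < f (i + 1 + a) - a := by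
      intro i
      have h2 := hgt (i + a)
      have h1 : f (i + a) < f (i + a + 1) := hmono (i + a)
      rw [show i + 1 + a = (i + a) + 1 by omega]
      omega
    have hsat' : SatB (fun i => f (i + a) - a) (fun i => {x | x + a ∈ V i}) φ 0 := by
      rw [shift_sat f V a hgt φ 0]
      simpa using hsat
    obtain ⟨tg, tV, tT, h1, h2, h3, h4⟩ :=
      complete φ ⟨fun i => f (i + a) - a, fun i => {x | x + a ∈ V i}, hgt', hmono', hsat'⟩
    exact ⟨tg, tV, tT, h1, h2, h3, h4⟩
  · rintro ⟨tg, tV, tT, h1, h2, h3, h4⟩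
    obtain ⟨f, V, hgt, hmono, hsat⟩ := sound h4
    rw [ofNatF_encF] at hsat
    exact ⟨f, hgt, hmono, V, 0, hsat⟩

/-! ### computability of the checker -/

section PR

open Primrec

lemma pr_pow : Primrec₂ ((· ^ ·) : ℕ → ℕ → ℕ) := Primrec₂.unpaired'.1 Nat.Primrec.pow

lemma pr_succ : Primrec (fun n : ℕ => n + 1) := Primrec.succ

lemma pr_Wn : Primrec Wn := by
  unfold Wn
  exact pr_pow.comp
    (Primrec.nat_add.comp
      (Primrec.nat_mul.comp (pr_pow.comp (Primrec.const 2) pr_succ)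
        (pr_pow.comp (Primrec.const 3) pr_succ))
      (Primrec.const 2))
    (Primrec.nat_add.comp Primrec.id (Primrec.const 2))

lemma pr_Xn : Primrec Xn := by
  unfold Xn
  exact Primrec.nat_add.comp pr_Wn (Primrec.const 1)

lemma pr_N3 : Primrec N3 := by
  unfold N3
  exact Primrec.nat_mul.comp (Primrec.nat_add.comp Primrec.id (Primrec.const 2)) pr_Xn

lemma pr_Rng : Primrec₂ Rng := by
  unfold Rng
  exact Primrec.nat_mul.comp
    (Primrec.nat_sub.comp (Primrec.nat_add.comp Primrec.fst (Primrec.const 1)) Primrec.snd)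
    (pr_Xn.comp Primrec.fst)

lemma pr_Bse : Primrec Bse := by
  unfold Bse
  exact Primrec.nat_add.comp (Primrec.nat_add.comp pr_N3 pr_Wn) (Primrec.const 2)

lemma pr_dg {α} [Primcodable α] {b t p : α → ℕ} (hb : Primrec b) (ht : Primrec t)
    (hp : Primrec p) : Primrec fun a => dg (b a) (t a) (p a) := by
  unfold dg
  exact Primrec.nat_mod.comp (Primrec.nat_div.comp ht (pr_pow.comp hb hp)) hb

lemma pr_gval {α} [Primcodable α] {n t p : α → ℕ} (hn : Primrec n) (ht : Primrec t)
    (hp : Primrec p) : Primrec fun a => gval (n a) (t a) (p a) := by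
  unfold gval
  exact pr_dg (pr_Bse.comp hn) ht hp

lemma pr_tbl {α} [Primcodable α] {n t m p : α → ℕ} (hn : Primrec n) (ht : Primrec t)
    (hm : Primrec m) (hp : Primrec p) : Primrec fun a => tbl (n a) (t a) (m a) (p a) := by
  unfold tbl
  exact pr_dg (Primrec.const 2) ht
    (Primrec.nat_add.comp
      (Primrec.nat_mul.comp hm (Primrec.nat_add.comp (pr_N3.comp hn) (Primrec.const 1))) hp)

lemma pr_allB {α} [Primcodable α] {k : α → ℕ} {p : α → ℕ → Bool}
    (hk : Primrec k) (hp : Primrec₂ p) : Primrec fun a => allB (k a) (p a) := by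
  have hh : Primrec₂ (fun (a : α) (s : Bool × ℕ) => s.1 && p a s.2) :=
    (Primrec.dom_bool₂ (· && ·)).comp (Primrec.fst.comp Primrec.snd)
      (hp.comp Primrec.fst (Primrec.snd.comp Primrec.snd))
  have := Primrec.list_foldl (Primrec.list_range.comp hk) (Primrec.const true) hh
  exact this.of_eq fun a => rfl

lemma pr_anyB {α} [Primcodable α] {k : α → ℕ} {p : α → ℕ → Bool}
    (hk : Primrec k) (hp : Primrec₂ p) : Primrec fun a => anyB (k a) (p a) := by
  have hh : Primrec₂ (fun (a : α) (s : Bool × ℕ) => s.1 || p a s.2) :=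
    (Primrec.dom_bool₂ (· || ·)).comp (Primrec.fst.comp Primrec.snd)
      (hp.comp Primrec.fst (Primrec.snd.comp Primrec.snd))
  have := Primrec.list_foldl (Primrec.list_range.comp hk) (Primrec.const false) hh
  exact this.of_eq fun a => rfl

lemma pr_eqb {α} [Primcodable α] {f g : α → ℕ} (hf : Primrec f) (hg : Primrec g) :
    Primrec fun a => decide (f a = g a) := (PrimrecRel.comp Primrec.eq hf hg).decide

lemma pr_leb {α} [Primcodable α] {f g : α → ℕ} (hf : Primrec f) (hg : Primrec g) :
    Primrec fun a => decide (f a ≤ g a) := (PrimrecRel.comp Primrec.nat_le hf hg).decide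

lemma pr_ltb {α} [Primcodable α] {f g : α → ℕ} (hf : Primrec f) (hg : Primrec g) :
    Primrec fun a => decide (f a < g a) := (PrimrecRel.comp Primrec.nat_lt hf hg).decide

lemma pr_beqb {α} [Primcodable α] {f g : α → Bool} (hf : Primrec f) (hg : Primrec g) :
    Primrec fun a => decide (f a = g a) := (PrimrecRel.comp Primrec.eq hf hg).decide

lemma pr_band {α} [Primcodable α] {f g : α → Bool} (hf : Primrec f) (hg : Primrec g) :
    Primrec fun a => f a && g a := (Primrec.dom_bool₂ (· && ·)).comp hf hg

lemma pr_bor {α} [Primcodable α] {f g : α → Bool} (hf : Primrec f) (hg : Primrec g) :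
    Primrec fun a => f a || g a := (Primrec.dom_bool₂ (· || ·)).comp hf hg

-- the tuple type used for chkRow
-- x = (n, (tg, (tV, (tT, (m, a)))))
private abbrev T6 : Type := ℕ × ℕ × ℕ × ℕ × ℕ × ℕ

private def x1 : T6 → ℕ := fun x => x.1
private def x2 : T6 → ℕ := fun x => x.2.1
private def x3 : T6 → ℕ := fun x => x.2.2.1
private def x4 : T6 → ℕ := fun x => x.2.2.2.1
private def x5 : T6 → ℕ := fun x => x.2.2.2.2.1
private def x6 : T6 → ℕ := fun x => x.2.2.2.2.2

private lemma pr_x1 : Primrec x1 := Primrec.fst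
private lemma pr_x2 : Primrec x2 := Primrec.fst.comp Primrec.snd
private lemma pr_x3 : Primrec x3 := Primrec.fst.comp (Primrec.snd.comp Primrec.snd)
private lemma pr_x4 : Primrec x4 :=
  Primrec.fst.comp (Primrec.snd.comp (Primrec.snd.comp Primrec.snd))
private lemma pr_x5 : Primrec x5 :=
  Primrec.fst.comp (Primrec.snd.comp (Primrec.snd.comp (Primrec.snd.comp Primrec.snd)))
private lemma pr_x6 : Primrec x6 :=
  Primrec.snd.comp (Primrec.snd.comp (Primrec.snd.comp (Primrec.snd.comp Primrec.snd)))

set_option maxHeartbeats 2000000 in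
lemma pr_chkRow : Primrec (fun x : T6 => chkRow (x1 x) (x2 x) (x3 x) (x4 x) (x5 x) (x6 x)) := by
  unfold chkRow
  have hm5 : Primrec fun x : T6 => x5 x % 5 :=
    Primrec.nat_mod.comp pr_x5 (Primrec.const 5)
  have hmd : Primrec fun x : T6 => x5 x / 5 :=
    Primrec.nat_div.comp pr_x5 (Primrec.const 5)
  have hu1 : Primrec fun x : T6 => (x5 x / 5).unpair.1 :=
    Primrec.fst.comp (Primrec.unpair.comp hmd)
  have hu2 : Primrec fun x : T6 => (x5 x / 5).unpair.2 :=
    Primrec.snd.comp (Primrec.unpair.comp hmd)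
  have c0 : PrimrecPred fun x : T6 => x5 x % 5 = 0 :=
    PrimrecRel.comp Primrec.eq hm5 (Primrec.const 0)
  have c1 : PrimrecPred fun x : T6 => x5 x % 5 = 1 :=
    PrimrecRel.comp Primrec.eq hm5 (Primrec.const 1)
  have c2 : PrimrecPred fun x : T6 => x5 x % 5 = 2 :=
    PrimrecRel.comp Primrec.eq hm5 (Primrec.const 2)
  have c3 : PrimrecPred fun x : T6 => x5 x % 5 = 3 :=
    PrimrecRel.comp Primrec.eq hm5 (Primrec.const 3)
  have htTm : Primrec fun x : T6 => tbl (x1 x) (x4 x) (x5 x) (x6 x) :=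
    pr_tbl pr_x1 pr_x4 pr_x5 pr_x6
  have hinner : Primrec fun q : (T6 × ℕ) × ℕ =>
      (decide (q.2 < x6 q.1.1) ||
        decide (tbl (x1 q.1.1) (x4 q.1.1) ((x5 q.1.1 / 5)).unpair.1 q.2 = 1)) := by
    refine pr_bor (pr_ltb Primrec.snd (pr_x6.comp (Primrec.fst.comp Primrec.fst))) ?_
    refine pr_eqb ?_ (Primrec.const 1)
    exact pr_tbl (pr_x1.comp (Primrec.fst.comp Primrec.fst))
      (pr_x4.comp (Primrec.fst.comp Primrec.fst))
      (hu1.comp (Primrec.fst.comp Primrec.fst)) Primrec.snd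
  have hQ : Primrec fun q : T6 × ℕ =>
      (decide (x6 q.1 ≤ q.2) && decide (tbl (x1 q.1) (x4 q.1) ((x5 q.1 / 5)).unpair.2 q.2 = 1) &&
        allB q.2 (fun c => decide (c < x6 q.1) ||
          decide (tbl (x1 q.1) (x4 q.1) ((x5 q.1 / 5)).unpair.1 c = 1))) := by
    refine pr_band (pr_band ?_ ?_) ?_
    · exact pr_leb (pr_x6.comp Primrec.fst) Primrec.snd
    · exact pr_eqb (pr_tbl (pr_x1.comp Primrec.fst) (pr_x4.comp Primrec.fst)
        (hu2.comp Primrec.fst) Primrec.snd) (Primrec.const 1)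
    · exact pr_allB Primrec.snd hinner.to₂
  have hany : Primrec fun x : T6 => anyB (gval (x1 x) (x2 x) (x6 x) + 1)
      (fun b => decide (x6 x ≤ b) && decide (tbl (x1 x) (x4 x) ((x5 x / 5)).unpair.2 b = 1) &&
        allB b (fun c => decide (c < x6 x) ||
          decide (tbl (x1 x) (x4 x) ((x5 x / 5)).unpair.1 c = 1))) :=
    pr_anyB (Primrec.nat_add.comp (pr_gval pr_x1 pr_x2 pr_x6) (Primrec.const 1)) hQ.to₂
  refine Primrec.ite c0 (pr_eqb htTm (pr_tbl pr_x1 pr_x3 hmd pr_x6)) ?_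
  refine Primrec.ite c1
    (pr_eqb htTm (Primrec.nat_sub.comp (Primrec.const 1) (pr_tbl pr_x1 pr_x4 hmd pr_x6))) ?_
  refine Primrec.ite c2
    (pr_eqb htTm (Primrec.nat_mul.comp (pr_tbl pr_x1 pr_x4 hu1 pr_x6)
      (pr_tbl pr_x1 pr_x4 hu2 pr_x6))) ?_
  refine Primrec.ite c3
    (pr_eqb htTm (pr_tbl pr_x1 pr_x4 hmd
      (Primrec.nat_add.comp pr_x6 (Primrec.const 1)))) ?_
  exact pr_beqb (pr_eqb htTm (Primrec.const 1)) hany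

set_option maxHeartbeats 2000000 in
lemma pr_chkG : Primrec (fun q : ℕ × ℕ => chkG q.1 q.2) := by
  unfold chkG
  have h1 : Primrec fun q : (ℕ × ℕ) × ℕ =>
      (decide (q.2 < gval q.1.1 q.1.2 q.2) && decide (gval q.1.1 q.1.2 q.2 ≤ q.2 + Wn q.1.1)) := by
    refine pr_band ?_ ?_
    · exact pr_ltb Primrec.snd
        (pr_gval (Primrec.fst.comp Primrec.fst) (Primrec.snd.comp Primrec.fst) Primrec.snd)
    · exact pr_leb
        (pr_gval (Primrec.fst.comp Primrec.fst) (Primrec.snd.comp Primrec.fst) Primrec.snd)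
        (Primrec.nat_add.comp Primrec.snd (pr_Wn.comp (Primrec.fst.comp Primrec.fst)))
  have h2 : Primrec fun q : (ℕ × ℕ) × ℕ =>
      decide (gval q.1.1 q.1.2 q.2 < gval q.1.1 q.1.2 (q.2 + 1)) :=
    pr_ltb
      (pr_gval (Primrec.fst.comp Primrec.fst) (Primrec.snd.comp Primrec.fst) Primrec.snd)
      (pr_gval (Primrec.fst.comp Primrec.fst) (Primrec.snd.comp Primrec.fst)
        (Primrec.nat_add.comp Primrec.snd (Primrec.const 1)))
  refine pr_band ?_ ?_
  · exact pr_allB (Primrec.nat_add.comp (pr_N3.comp Primrec.fst) (Primrec.const 1)) h1.to₂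
  · exact pr_allB (pr_N3.comp Primrec.fst) h2.to₂

-- x = (n, (tg, (tV, tT)))
private abbrev T4 : Type := ℕ × ℕ × ℕ × ℕ

private def y1 : T4 → ℕ := fun x => x.1
private def y2 : T4 → ℕ := fun x => x.2.1
private def y3 : T4 → ℕ := fun x => x.2.2.1
private def y4 : T4 → ℕ := fun x => x.2.2.2

private lemma pr_y1 : Primrec y1 := Primrec.fst
private lemma pr_y2 : Primrec y2 := Primrec.fst.comp Primrec.snd
private lemma pr_y3 : Primrec y3 := Primrec.fst.comp (Primrec.snd.comp Primrec.snd)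
private lemma pr_y4 : Primrec y4 := Primrec.snd.comp (Primrec.snd.comp Primrec.snd)

set_option maxHeartbeats 2000000 in
lemma pr_chk : Primrec (fun x : T4 => chk (y1 x) (y2 x) (y3 x) (y4 x)) := by
  unfold chk
  have hg6 : Primrec (fun q : (T4 × ℕ) × ℕ =>
      ((y1 q.1.1, y2 q.1.1, y3 q.1.1, y4 q.1.1, q.1.2, q.2) : T6)) := by
    refine Primrec.pair (pr_y1.comp (Primrec.fst.comp Primrec.fst)) ?_
    refine Primrec.pair (pr_y2.comp (Primrec.fst.comp Primrec.fst)) ?_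
    refine Primrec.pair (pr_y3.comp (Primrec.fst.comp Primrec.fst)) ?_
    refine Primrec.pair (pr_y4.comp (Primrec.fst.comp Primrec.fst)) ?_
    exact Primrec.pair (Primrec.snd.comp Primrec.fst) Primrec.snd
  have hrow : Primrec (fun q : (T4 × ℕ) × ℕ =>
      chkRow (y1 q.1.1) (y2 q.1.1) (y3 q.1.1) (y4 q.1.1) q.1.2 q.2) := by
    have := pr_chkRow.comp hg6
    exact this.of_eq fun q => by simp [x1, x2, x3, x4, x5, x6]
  have hinner : Primrec (fun q : T4 × ℕ =>
      allB (Rng (y1 q.1) q.2 + 1) (fun a => chkRow (y1 q.1) (y2 q.1) (y3 q.1) (y4 q.1) q.2 a)) :=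
    pr_allB (Primrec.nat_add.comp
      (pr_Rng.comp (pr_y1.comp Primrec.fst) Primrec.snd) (Primrec.const 1)) hrow.to₂
  refine pr_band (pr_band ?_ ?_) ?_
  · exact pr_chkG.comp (Primrec.pair pr_y1 pr_y2)
  · exact pr_allB (Primrec.nat_add.comp pr_y1 (Primrec.const 1)) hinner.to₂
  · exact pr_eqb (pr_tbl pr_y1 pr_y4 pr_y1 (Primrec.const 0)) (Primrec.const 1)

set_option maxHeartbeats 2000000 in
lemma pr_decb : Primrec decb := by
  unfold decb
  have hg4 : Primrec (fun q : ((ℕ × ℕ) × ℕ) × ℕ =>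
      ((q.1.1.1, q.1.1.2, q.1.2, q.2) : T4)) := by
    refine Primrec.pair (Primrec.fst.comp (Primrec.fst.comp Primrec.fst)) ?_
    refine Primrec.pair (Primrec.snd.comp (Primrec.fst.comp Primrec.fst)) ?_
    exact Primrec.pair (Primrec.snd.comp Primrec.fst) Primrec.snd
  have hchk : Primrec (fun q : ((ℕ × ℕ) × ℕ) × ℕ => chk q.1.1.1 q.1.1.2 q.1.2 q.2) := by
    have := pr_chk.comp hg4
    exact this.of_eq fun q => by simp [y1, y2, y3, y4]
  have hbound : Primrec fun q : ℕ × ℕ => (2:ℕ) ^ ((q.1 + 1) * (N3 q.1 + 1)) :=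
    pr_pow.comp (Primrec.const 2)
      (Primrec.nat_mul.comp (Primrec.nat_add.comp Primrec.fst (Primrec.const 1))
        (Primrec.nat_add.comp (pr_N3.comp Primrec.fst) (Primrec.const 1)))
  have hbound2 : Primrec fun q : (ℕ × ℕ) × ℕ => (2:ℕ) ^ ((q.1.1 + 1) * (N3 q.1.1 + 1)) :=
    hbound.comp Primrec.fst
  have hin2 : Primrec (fun q : (ℕ × ℕ) × ℕ =>
      anyB (2 ^ ((q.1.1 + 1) * (N3 q.1.1 + 1))) (fun tT => chk q.1.1 q.1.2 q.2 tT)) :=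
    pr_anyB hbound2 hchk.to₂
  have hin1 : Primrec (fun q : ℕ × ℕ =>
      anyB (2 ^ ((q.1 + 1) * (N3 q.1 + 1))) (fun tV =>
        anyB (2 ^ ((q.1 + 1) * (N3 q.1 + 1))) (fun tT => chk q.1 q.2 tV tT))) :=
    pr_anyB hbound hin2.to₂
  exact pr_anyB (pr_pow.comp pr_Bse (Primrec.nat_add.comp pr_N3 (Primrec.const 1))) hin1.to₂

end PR

end SatDec

/-- the satisfiability problem for `LTL_{Past}` is decidable:
satisfiability (over all bound functions and valuations) is a computable
predicate on (codes of) formulas. -/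
theorem satisfiabilityPast_decidable :
    ∃ f' : ℕ → Bool, Computable f' ∧
      ∀ φ : Formula,
        ((∃ f : ℕ → ℕ, (∀ i, i < f i) ∧ (∀ i, f i < f (i + 1)) ∧
            ∃ (V : ℕ → Set ℕ) (a : ℕ), SatB f V φ a) ↔ f' (encF φ) = true) := by
  exact ⟨SatDec.decb, SatDec.pr_decb.to_comp, fun φ => SatDec.sat_iff_decb φ⟩
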